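/- arXiv:2209.09891 — 10 statements merged into one kernel-verified Lean document; each statement's English description precedes it below -/
import Mathlib

section
/- The number of crossings is equidistributed over 132-avoiding and 213-avoiding permutations: for every n ≥ 1, ∑_{σ∈S_n(132)} q^{crs(σ)} = ∑_{σ∈S_n(213)} q^{crs(σ)}. -/
open Finset Polynomial Equiv

attribute [local instance] Classical.propDecidable

def isCrossing {n : ℕ} (σ : Equiv.Perm (Fin n)) (i j : Fin n) : Prop :=
  (i < j ∧ j < σ i ∧ σ i < σ j) ∨ (σ i < σ j ∧ σ j ≤ i ∧ i < j)

noncomputable def crs {n : ℕ} (σ : Equiv.Perm (Fin n)) : ℕ :=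
  (Finset.univ.filter (fun p : Fin n × Fin n => isCrossing σ p.1 p.2)).card

def avoids123 {n : ℕ} (σ : Equiv.Perm (Fin n)) : Prop :=
  ¬ ∃ i j k : Fin n, i < j ∧ j < k ∧ σ i < σ j ∧ σ j < σ k

def avoids132 {n : ℕ} (σ : Equiv.Perm (Fin n)) : Prop :=
  ¬ ∃ i j k : Fin n, i < j ∧ j < k ∧ σ i < σ k ∧ σ k < σ j

def avoids213 {n : ℕ} (σ : Equiv.Perm (Fin n)) : Prop :=
  ¬ ∃ i j k : Fin n, i < j ∧ j < k ∧ σ j < σ i ∧ σ i < σ k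

def avoids231 {n : ℕ} (σ : Equiv.Perm (Fin n)) : Prop :=
  ¬ ∃ i j k : Fin n, i < j ∧ j < k ∧ σ k < σ i ∧ σ i < σ j

def avoids312 {n : ℕ} (σ : Equiv.Perm (Fin n)) : Prop :=
  ¬ ∃ i j k : Fin n, i < j ∧ j < k ∧ σ j < σ k ∧ σ k < σ i

def avoids321 {n : ℕ} (σ : Equiv.Perm (Fin n)) : Prop :=
  ¬ ∃ i j k : Fin n, i < j ∧ j < k ∧ σ k < σ j ∧ σ j < σ i

noncomputable def ut {n : ℕ} (σ : Equiv.Perm (Fin n)) : ℕ :=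
  (Finset.univ.filter (fun i : Fin n => σ⁻¹ i < i ∧ i < σ i)).card

noncomputable def lt' {n : ℕ} (σ : Equiv.Perm (Fin n)) : ℕ :=
  (Finset.univ.filter (fun i : Fin n => σ i < i ∧ i < σ⁻¹ i)).card

/-!
The reverse-complement of the inverse, `τ = rev ∘ σ⁻¹ ∘ rev`, is an involution of `S_n`.
Reading the diagram of `σ` through the antidiagonal turns a `132` pattern into a `213` pattern
and back, and it sends a crossing `(i, j)` of `σ` to the crossing `(rev (σ j), rev (σ i))` of `τ`,
of the same kind. Hence `τ` is a crossing-preserving bijection `S_n(132) → S_n(213)`.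
-/

namespace Equiv.Perm

variable {n : ℕ}

def revInvRev (σ : Perm (Fin n)) : Perm (Fin n) :=
  Fin.revPerm * σ⁻¹ * Fin.revPerm

@[simp]
lemma revInvRev_apply (σ : Perm (Fin n)) (i : Fin n) :
    revInvRev σ i = Fin.rev (σ⁻¹ (Fin.rev i)) := rfl

lemma revInvRev_apply_rev_apply (σ : Perm (Fin n)) (i : Fin n) :
    revInvRev σ (Fin.rev (σ i)) = Fin.rev i := by
  simp

lemma revInvRev_involutive : Function.Involutive (revInvRev (n := n)) := by
  intro σ
  ext i
  simp [revInvRev, mul_assoc]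

lemma isCrossing_revInvRev_iff (σ : Perm (Fin n)) (i j : Fin n) :
    isCrossing (revInvRev σ) (Fin.rev (σ j)) (Fin.rev (σ i)) ↔ isCrossing σ i j := by
  simp only [isCrossing, revInvRev_apply_rev_apply, Fin.rev_lt_rev, Fin.rev_le_rev]
  tauto

lemma crs_revInvRev (σ : Perm (Fin n)) : crs (revInvRev σ) = crs σ := by
  refine Finset.card_bij' (fun p _ => (σ⁻¹ (Fin.rev p.2), σ⁻¹ (Fin.rev p.1)))
    (fun p _ => (Fin.rev (σ p.2), Fin.rev (σ p.1))) ?_ ?_ ?_ ?_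
  · rintro ⟨i, j⟩ h
    simp only [Finset.mem_filter, Finset.mem_univ, true_and] at h ⊢
    rw [← isCrossing_revInvRev_iff]
    simpa using h
  · rintro ⟨i, j⟩ h
    simp only [Finset.mem_filter, Finset.mem_univ, true_and] at h ⊢
    exact (isCrossing_revInvRev_iff σ i j).mpr h
  all_goals simp

lemma avoids213_revInvRev (σ : Perm (Fin n)) (h : avoids132 σ) : avoids213 (revInvRev σ) := by
  rintro ⟨i, j, k, hij, hjk, hji, hik⟩
  simp only [revInvRev_apply, Fin.rev_lt_rev] at hji hik
  exact h ⟨σ⁻¹ (Fin.rev k), σ⁻¹ (Fin.rev i), σ⁻¹ (Fin.rev j), hik, hji,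
    by simpa using hjk, by simpa using hij⟩

lemma avoids132_revInvRev (σ : Perm (Fin n)) (h : avoids213 σ) : avoids132 (revInvRev σ) := by
  rintro ⟨i, j, k, hij, hjk, hik, hkj⟩
  simp only [revInvRev_apply, Fin.rev_lt_rev] at hik hkj
  exact h ⟨σ⁻¹ (Fin.rev j), σ⁻¹ (Fin.rev k), σ⁻¹ (Fin.rev i), hkj, hik,
    by simpa using hjk, by simpa using hij⟩

lemma avoids213_revInvRev_iff (σ : Perm (Fin n)) : avoids213 (revInvRev σ) ↔ avoids132 σ :=
  ⟨fun h => revInvRev_involutive σ ▸ avoids132_revInvRev _ h, avoids213_revInvRev σ⟩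

end Equiv.Perm

theorem equidistribution_132_213_general (n : ℕ) :
    ∑ σ ∈ Finset.univ.filter (fun σ : Equiv.Perm (Fin n) => avoids132 σ),
        (Polynomial.X : Polynomial ℤ) ^ crs σ =
      ∑ σ ∈ Finset.univ.filter (fun σ : Equiv.Perm (Fin n) => avoids213 σ),
        (Polynomial.X : Polynomial ℤ) ^ crs σ :=
  Finset.sum_equiv Equiv.Perm.revInvRev_involutive.toPerm
    (by simp [Equiv.Perm.avoids213_revInvRev_iff]) (by simp [Equiv.Perm.crs_revInvRev])

theorem equidistribution_132_213 (n : ℕ) (hn : 1 ≤ n) :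
    ∑ σ ∈ Finset.univ.filter (fun σ : Equiv.Perm (Fin n) => avoids132 σ),
        (Polynomial.X : Polynomial ℤ) ^ crs σ =
      ∑ σ ∈ Finset.univ.filter (fun σ : Equiv.Perm (Fin n) => avoids213 σ),
        (Polynomial.X : Polynomial ℤ) ^ crs σ :=
  equidistribution_132_213_general n
end

section
/- For any permutation σ of [n], crs(σ⁻¹) = crs(σ) + ut(σ) − lt(σ), where ut(σ) = |{i : σ⁻¹(i) < i < σ(i)}| and lt(σ) = |{i : σ(i) < i < σ⁻¹(i)}|. -/
open Finset Polynomial Equiv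

attribute [local instance] Classical.propDecidable

/-!
Split the crossings of `σ` into upper ones (`i < j < σ i < σ j`), strictly lower ones
(`σ i < σ j < i < j`) and boundary ones (`σ j = i`). The relabelling `(i, j) ↦ (σ i, σ j)` turns
upper crossings of `σ` into strictly lower crossings of `σ⁻¹`, and vice versa. A boundary crossing
is determined by `i` (as `j = σ⁻¹ i`), and these `i` are exactly those with `σ i < i < σ⁻¹ i`; so
boundary crossings are counted by `lt' σ` for `σ` and by `lt' σ⁻¹ = ut σ` for `σ⁻¹`.
-/

section

variable {n : ℕ} (σ : Perm (Fin n))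

noncomputable def upperCrossings : Finset (Fin n × Fin n) :=
  univ.filter fun p => p.1 < p.2 ∧ p.2 < σ p.1 ∧ σ p.1 < σ p.2

noncomputable def lowerCrossings : Finset (Fin n × Fin n) :=
  univ.filter fun p => σ p.1 < σ p.2 ∧ σ p.2 < p.1 ∧ p.1 < p.2

noncomputable def boundaryCrossings : Finset (Fin n × Fin n) :=
  univ.filter fun p => σ p.1 < σ p.2 ∧ σ p.2 = p.1 ∧ p.1 < p.2

lemma crs_eq_card_add_card_add_card :
    crs σ = #(upperCrossings σ) + #(lowerCrossings σ) + #(boundaryCrossings σ) := by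
  have hsplit : univ.filter (fun p : Fin n × Fin n => isCrossing σ p.1 p.2)
      = upperCrossings σ ∪ (lowerCrossings σ ∪ boundaryCrossings σ) := by
    ext p
    simp only [upperCrossings, lowerCrossings, boundaryCrossings, isCrossing, mem_union,
      mem_filter, mem_univ, true_and, le_iff_lt_or_eq]
    tauto
  have hLE : Disjoint (lowerCrossings σ) (boundaryCrossings σ) := by
    simp only [disjoint_left, lowerCrossings, boundaryCrossings, mem_filter, mem_univ, true_and]
    rintro p ⟨-, h₁, -⟩ ⟨-, h₂, -⟩
    exact h₁.ne h₂
  have hU : Disjoint (upperCrossings σ) (lowerCrossings σ ∪ boundaryCrossings σ) := by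
    simp only [disjoint_left, upperCrossings, lowerCrossings, boundaryCrossings, mem_union,
      mem_filter, mem_univ, true_and]
    rintro p ⟨h₁, h₂, h₃⟩ (h | h) <;> order
  rw [crs, hsplit, card_union_of_disjoint hU, card_union_of_disjoint hLE, add_assoc]

lemma card_lowerCrossings_inv : #(lowerCrossings σ⁻¹) = #(upperCrossings σ) :=
  card_equiv (σ⁻¹.prodCongr σ⁻¹) fun p => by
    simp [lowerCrossings, upperCrossings, and_comm]

lemma card_boundaryCrossings : #(boundaryCrossings σ) = lt' σ := by
  rw [lt']
  refine card_nbij' Prod.fst (fun i => (i, σ⁻¹ i)) ?_ ?_ ?_ fun _ _ => rfl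
  · simp only [Set.MapsTo, boundaryCrossings, coe_filter, mem_univ, true_and, Set.mem_ofPred_eq,
      Perm.coe_inv, and_imp, Prod.forall]
    rintro _ j h₁ rfl h₂
    simp [h₁, h₂]
  · intro i hi
    simpa [boundaryCrossings] using hi
  · simp only [Set.LeftInvOn, boundaryCrossings, coe_filter, mem_univ, true_and,
      Set.mem_ofPred_eq, Perm.coe_inv, and_imp, Prod.forall, Prod.mk.injEq]
    rintro _ j - rfl -
    simp

lemma lt'_inv : lt' σ⁻¹ = ut σ := by
  simp only [lt', ut, inv_inv, and_comm]

end

theorem crs_inv (n : ℕ) (σ : Equiv.Perm (Fin n)) :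
    (crs σ⁻¹ : ℤ) = (crs σ : ℤ) + (ut σ : ℤ) - (lt' σ : ℤ) := by
  have hU : #(upperCrossings σ⁻¹) = #(lowerCrossings σ) := by
    simpa using (card_lowerCrossings_inv σ⁻¹).symm
  rw [crs_eq_card_add_card_add_card, crs_eq_card_add_card_add_card, card_boundaryCrossings,
    card_boundaryCrossings, lt'_inv, hU, card_lowerCrossings_inv]
  push_cast
  ring
end

section
/- For any permutation σ of [n−1], let σ' ∈ S_n be obtained from σ by inserting the value 1 at the last position (i.e., σ'(i) = σ(i)+1 for i ≤ n−1 and σ'(n) = 1). Then crs(σ') = crs(σ) + ut(σ) − lt(σ), where ut(σ) = |{i : σ⁻¹(i) < i < σ(i)}| and lt(σ) = |{i : σ(i) < i < σ⁻¹(i)}|. -/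
open Finset Polynomial Equiv

attribute [local instance] Classical.propDecidable

theorem crs_insert_one_last (n : ℕ) (σ : Equiv.Perm (Fin n)) (σ' : Equiv.Perm (Fin (n + 1)))
    (h1 : ∀ i : Fin n, σ' i.castSucc = (σ i).succ)
    (h2 : σ' (Fin.last n) = 0) :
    (crs σ' : ℤ) = (crs σ : ℤ) + (ut σ : ℤ) - (lt' σ : ℤ) := by
  classical
  set S := Finset.univ.filter (fun p : Fin n × Fin n => isCrossing σ p.1 p.2) with hS
  set T := Finset.univ.filter
      (fun p : Fin n × Fin n => isCrossing σ' p.1.castSucc p.2.castSucc) with hT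
  set L := Finset.univ.filter
      (fun p : Fin n × Fin n => p.2 = σ⁻¹ p.1 ∧ σ p.1 < p.1 ∧ p.1 < p.2) with hL
  set A := Finset.univ.filter
      (fun p : Fin n × Fin n => p.2 = σ p.1 ∧ p.1 < p.2 ∧ σ p.1 < σ p.2) with hA
  -- pointwise characterization of crossings of σ' among castSucc pairs
  have key : ∀ i j : Fin n, isCrossing σ' i.castSucc j.castSucc ↔
      ((i < j ∧ j ≤ σ i ∧ σ i < σ j) ∨ (σ i < σ j ∧ σ j < i ∧ i < j)) := by
    intro i j
    unfold isCrossing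
    rw [h1, h1]
    simp [Fin.castSucc_lt_castSucc_iff, Fin.succ_lt_succ_iff,
      Fin.castSucc_lt_succ_iff, Fin.succ_le_castSucc_iff]
  -- crs σ' = T.card
  have hcrs' : crs σ' = T.card := by
    unfold crs
    refine (Finset.card_bij (fun (p : Fin n × Fin n) (_ : p ∈ T) =>
      (p.1.castSucc, p.2.castSucc)) ?_ ?_ ?_).symm
    · intro p hp
      simp only [hT, Finset.mem_filter, Finset.mem_univ, true_and] at hp ⊢
      exact hp
    · intro p hp q hq h
      have h1' := congrArg Prod.fst h
      have h2' := congrArg Prod.snd h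
      simp only at h1' h2'
      exact Prod.ext (Fin.castSucc_injective n h1') (Fin.castSucc_injective n h2')
    · intro q hq
      simp only [Finset.mem_filter, Finset.mem_univ, true_and] at hq
      have hq1 : q.1 ≠ Fin.last n := by
        intro h
        rcases hq with ⟨h12, _, _⟩ | ⟨_, _, h12⟩ <;>
          exact absurd (h ▸ h12) (by simp [Fin.lt_iff_val_lt_val, Fin.last]; omega)
      have hq2 : q.2 ≠ Fin.last n := by
        intro h
        rcases hq with ⟨_, hlt, _⟩ | ⟨hlt, hle, _⟩
        · rw [h] at hlt
          exact absurd hlt (by have := Fin.le_last (σ' q.1); omega)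
        · rw [h, h2] at hlt
          exact absurd hlt (by have := Fin.zero_le (σ' q.1); omega)
      refine ⟨(q.1.castPred hq1, q.2.castPred hq2), ?_, ?_⟩
      · simp only [hT, Finset.mem_filter, Finset.mem_univ, true_and,
          Fin.castSucc_castPred]
        exact hq
      · simp [Fin.castSucc_castPred]
  -- T in terms of S, L, A : T ∪ L = S ∪ A and the unions are disjoint
  have hTL : Disjoint T L := by
    rw [Finset.disjoint_left]
    intro p hp hq
    simp only [hT, hL, Finset.mem_filter, Finset.mem_univ, true_and, key] at hp hq
    obtain ⟨hj, hlt, hlt2⟩ := hq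
    have hsp : σ p.2 = p.1 := by rw [hj]; simp
    rcases hp with ⟨h12, hle, _⟩ | ⟨_, hlt3, h12⟩
    · exact absurd (lt_of_lt_of_le h12 hle) (not_lt.mpr (le_of_lt hlt))
    · rw [hsp] at hlt3; exact lt_irrefl _ hlt3
  have hSA : Disjoint S A := by
    rw [Finset.disjoint_left]
    intro p hp hq
    simp only [hS, hA, Finset.mem_filter, Finset.mem_univ, true_and] at hp hq
    obtain ⟨hj, hlt, hlt2⟩ := hq
    rcases hp with ⟨_, hlt3, _⟩ | ⟨hlt4, hle, h12⟩
    · rw [hj] at hlt3; exact lt_irrefl _ hlt3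
    · have h5 : σ p.2 < σ p.1 := by rw [← hj]; exact lt_of_le_of_lt hle h12
      exact lt_asymm hlt4 h5
  have hunion : T ∪ L = S ∪ A := by
    ext p
    simp only [Finset.mem_union, hT, hS, hL, hA, Finset.mem_filter, Finset.mem_univ,
      true_and, key]
    simp only [isCrossing]
    constructor
    · rintro ((⟨h12, hle, hlt⟩ | ⟨hlt, hlt2, h12⟩) | ⟨hj, hlt, hlt2⟩)
      · rcases lt_or_eq_of_le hle with h | h
        · exact Or.inl (Or.inl ⟨h12, h, hlt⟩)
        · exact Or.inr ⟨h, h12, hlt⟩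
      · exact Or.inl (Or.inr ⟨hlt, le_of_lt hlt2, h12⟩)
      · refine Or.inl (Or.inr ?_)
        have hsp : σ p.2 = p.1 := by rw [hj]; simp
        exact ⟨by rw [hsp]; exact hlt, by rw [hsp], hlt2⟩
    · rintro ((⟨h12, hlt, hlt2⟩ | ⟨hlt, hle, h12⟩) | ⟨hj, h12, hlt⟩)
      · exact Or.inl (Or.inl ⟨h12, le_of_lt hlt, hlt2⟩)
      · rcases lt_or_eq_of_le hle with h | h
        · exact Or.inl (Or.inr ⟨hlt, h, h12⟩)
        · refine Or.inr ⟨?_, ?_, h12⟩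
          · rw [← h]; simp
          · rw [h] at hlt; exact hlt
      · exact Or.inl (Or.inl ⟨h12, le_of_eq hj, hlt⟩)
  have hcard : T.card + L.card = S.card + A.card := by
    rw [← Finset.card_union_of_disjoint hTL, hunion,
      Finset.card_union_of_disjoint hSA]
  -- card L = lt' σ
  have hLcard : L.card = lt' σ := by
    unfold lt'
    refine (Finset.card_bij (fun (i : Fin n) (_ : i ∈ _) => (i, σ⁻¹ i)) ?_ ?_ ?_).symm
    · intro i hi
      simp only [Finset.mem_filter, Finset.mem_univ, true_and] at hi
      rw [hL]
      exact Finset.mem_filter.mpr ⟨Finset.mem_univ _, rfl, hi.1, hi.2⟩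
    · intro i _ j _ h
      exact congrArg Prod.fst h
    · intro p hp
      simp only [hL, Finset.mem_filter, Finset.mem_univ, true_and] at hp
      refine ⟨p.1, ?_, ?_⟩
      · simp only [Finset.mem_filter, Finset.mem_univ, true_and]
        exact ⟨hp.2.1, hp.1 ▸ hp.2.2⟩
      · exact (Prod.ext rfl hp.1.symm)
  -- card A = ut σ
  have hAcard : A.card = ut σ := by
    unfold ut
    refine (Finset.card_bij (fun (i : Fin n) (_ : i ∈ _) => (σ⁻¹ i, i)) ?_ ?_ ?_).symm
    · intro i hi
      simp only [Finset.mem_filter, Finset.mem_univ, true_and] at hi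
      rw [hA]
      refine Finset.mem_filter.mpr ⟨Finset.mem_univ _, by simp, hi.1, ?_⟩
      simpa using hi.2
    · intro i _ j _ h
      exact congrArg Prod.snd h
    · intro p hp
      simp only [hA, Finset.mem_filter, Finset.mem_univ, true_and] at hp
      obtain ⟨hj, h12, hlt⟩ := hp
      rw [hj] at h12 hlt
      refine ⟨p.2, ?_, ?_⟩
      · simp only [Finset.mem_filter, Finset.mem_univ, true_and, hj]
        exact ⟨by simpa using h12, hlt⟩
      · refine Prod.ext ?_ rfl
        simp [hj]
    -- done
  have hcrs : crs σ = S.card := rfl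
  have := hcard
  rw [hcrs', hLcard] at *
  omega
end

section
/- The map f sending σ ∈ S_{n−1} to the permutation f(σ) ∈ S_n defined by f(σ)(i) = σ⁻¹(i)+1 for i ≤ n−1 and f(σ)(n) = 1 is a bijection from S_{n−1} onto {τ ∈ S_n : τ(n)=1}, and it preserves the number of crossings: crs(f(σ)) = crs(σ) for all σ. -/
open Finset Polynomial Equiv

attribute [local instance] Classical.propDecidable

/-! Write `τ = f(σ)`, so that `τ (σ a) = a + 1`. Hence `(σ a, σ b)` is a crossing of `τ` exactly
when `(a, b)` is a crossing of `σ`: the shift exchanges the two kinds of crossings,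
`i < j < σ i < σ j` and `σ i < σ j ≤ i < j`. No crossing `(i, j)` of `τ` involves `n`, since it
has `i < j` and `τ i < τ j` while `τ n = 1`. So `(a, b) ↦ (σ a, σ b)` is a bijection between the
crossings of `σ` and those of `τ`. -/

theorem isCrossing.lt {n : ℕ} {σ : Perm (Fin n)} {i j : Fin n} (h : isCrossing σ i j) : i < j := by
  rcases h with ⟨h, -, -⟩ | ⟨-, -, h⟩ <;> exact h

theorem isCrossing.apply_lt {n : ℕ} {σ : Perm (Fin n)} {i j : Fin n} (h : isCrossing σ i j) :
    σ i < σ j := by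
  rcases h with ⟨-, -, h⟩ | ⟨h, -, -⟩ <;> exact h

section Shift

variable {n : ℕ} {σ : Perm (Fin n)} {τ : Perm (Fin (n + 1))}

theorem apply_castSucc_apply (h : ∀ i, τ i.castSucc = (σ⁻¹ i).succ) (a : Fin n) :
    τ (σ a).castSucc = a.succ := by
  simp [h]

theorem isCrossing_castSucc_iff (h : ∀ i, τ i.castSucc = (σ⁻¹ i).succ) (a b : Fin n) :
    isCrossing τ (σ a).castSucc (σ b).castSucc ↔ isCrossing σ a b := by
  simp only [isCrossing, apply_castSucc_apply h, Fin.castSucc_lt_castSucc_iff,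
    Fin.castSucc_lt_succ_iff, Fin.succ_le_castSucc_iff, Fin.succ_lt_succ_iff]
  tauto

theorem ne_last_of_isCrossing (hlast : τ (Fin.last n) = 0) {i j : Fin (n + 1)}
    (hij : isCrossing τ i j) : i ≠ Fin.last n ∧ j ≠ Fin.last n := by
  refine ⟨(hij.lt.trans_le (Fin.le_last j)).ne, ?_⟩
  rintro rfl
  exact (Fin.zero_le (τ i)).not_gt (hlast ▸ hij.apply_lt)

theorem crs_eq_of_apply_castSucc (h : ∀ i, τ i.castSucc = (σ⁻¹ i).succ)
    (hlast : τ (Fin.last n) = 0) : crs τ = crs σ := by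
  symm
  refine Finset.card_bij (fun p _ ↦ ((σ p.1).castSucc, (σ p.2).castSucc)) ?_ ?_ ?_
  · intro p hp
    simpa [isCrossing_castSucc_iff h] using hp
  · intro p _ q _ hpq
    simp only [Prod.mk.injEq, Fin.castSucc_inj, EmbeddingLike.apply_eq_iff_eq] at hpq
    exact Prod.ext hpq.1 hpq.2
  · rintro ⟨i, j⟩ hij
    simp only [Finset.mem_filter, Finset.mem_univ, true_and] at hij
    obtain ⟨hi, hj⟩ := ne_last_of_isCrossing hlast hij
    obtain ⟨i, rfl⟩ := Fin.exists_castSucc_eq.mpr hi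
    obtain ⟨j, rfl⟩ := Fin.exists_castSucc_eq.mpr hj
    refine ⟨(σ⁻¹ i, σ⁻¹ j), ?_, by simp⟩
    simpa [← isCrossing_castSucc_iff h] using hij

end Shift

theorem exists_perm_apply_castSucc_eq {n : ℕ} {τ : Perm (Fin (n + 1))}
    (hlast : τ (Fin.last n) = 0) : ∃ σ : Perm (Fin n), ∀ i, τ i.castSucc = (σ⁻¹ i).succ := by
  have hne (i : Fin n) : τ i.castSucc ≠ 0 := fun h0 ↦
    Fin.castSucc_ne_last i (τ.injective (h0.trans hlast.symm))
  let g (i : Fin n) : Fin n := (τ i.castSucc).pred (hne i)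
  have hg : Function.Injective g := fun a b hab ↦ by
    simpa [g, Fin.pred_inj] using hab
  refine ⟨(Equiv.ofBijective g hg.bijective_of_finite).symm, fun i ↦ ?_⟩
  simp [g]

theorem f_bijection_preserves_crs (n : ℕ)
    (F : Equiv.Perm (Fin n) → Equiv.Perm (Fin (n + 1)))
    (hF : ∀ (σ : Equiv.Perm (Fin n)) (i : Fin n), F σ i.castSucc = (σ⁻¹ i).succ)
    (hF' : ∀ σ : Equiv.Perm (Fin n), F σ (Fin.last n) = 0) :
    Set.BijOn F Set.univ {τ : Equiv.Perm (Fin (n + 1)) | τ (Fin.last n) = 0} ∧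
      ∀ σ : Equiv.Perm (Fin n), crs (F σ) = crs σ := by
  have hinj : Function.Injective F := fun σ σ' h ↦ by
    rw [← inv_inj]
    ext i : 1
    exact Fin.succ_injective _ (by rw [← hF, ← hF, h])
  refine ⟨⟨fun σ _ ↦ hF' σ, hinj.injOn, fun τ hτ ↦ ?_⟩,
    fun σ ↦ crs_eq_of_apply_castSucc (hF σ) (hF' σ)⟩
  obtain ⟨σ, hσ⟩ := exists_perm_apply_castSucc_eq hτ
  refine ⟨σ, trivial, Equiv.ext fun x ↦ Fin.lastCases ?_ (fun i ↦ ?_) x⟩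
  · rw [hF', hτ]
  · rw [hF, hσ]
end

section
/- Let F_n(q) = ∑_{σ∈S_n(321,231)} q^{crs(σ)} be the crossing-number distribution over permutations of [n] avoiding both 321 and 231. Then for all n ≥ 2, F_n(q) = (1+q)·F_{n−1}(q) + (1−q)·F_{n−2}(q), with F_0(q)=F_1(q)=1. -/
open Finset Polynomial Equiv

attribute [local instance] Classical.propDecidable

noncomputable def F321231 (n : ℕ) : Polynomial ℤ :=
  ∑ σ ∈ Finset.univ.filter (fun σ : Equiv.Perm (Fin n) => avoids321 σ ∧ avoids231 σ),
    (Polynomial.X : Polynomial ℤ) ^ crs σ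


/-!
Avoiding both 321 and 231 means that no k has two larger values σ i, σ j to its left, and by
counting the positions to the left of k this is equivalent to σ k ≥ k - 1 for every k. Such a
permutation is a concatenation of blocks `m 1 2 … (m-1)`; in it every crossing is a pair
(σ j, j) where j and σ j are both drops (σ j = j - 1), so `crs` counts these double drops.

Write σ ∈ S_{n+2} as `decomposeFin.symm (p, e)` with e ∈ S_{n+1}. The condition σ k ≥ k - 1 forces
p = 0 or p = e 0 + 1, and then holds exactly when it holds for e. For p = 0 a fixed point is
prepended to e and the crossings are unchanged; for p = e 0 + 1 the first block of e grows by one,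
which creates one new crossing unless that block is the fixed point e 0 = 0. Hence
F_{n+2} = F_{n+1} + ∑_e X^[e 0 ≠ 0] X^crs(e), and the e with e 0 = 0 contribute F_n.
-/

namespace Equiv.Perm

variable {n : ℕ}

def DropsAtMostOne (σ : Perm (Fin n)) : Prop := ∀ i : Fin n, (i : ℕ) ≤ σ i + 1

lemma card_filter_apply_lt (σ : Perm (Fin n)) (c : Fin n) : #{p | σ p < c} = c := by
  rw [card_equiv σ (t := {q | q < c}) (by simp), filter_gt_eq_Iio, Fin.card_Iio]

lemma DropsAtMostOne.apply_le_of_lt_apply {σ : Perm (Fin n)} (hσ : DropsAtMostOne σ)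
    {i j : Fin n} (hij : i < j) (hi : j < σ i) : σ j ≤ j := by
  by_contra! hj
  have hsub : ({p | σ p < j} : Finset (Fin n)) ⊆ ((Iic j).erase i).erase j := by
    intro p hp
    have := hσ p
    simp only [mem_filter, mem_univ, true_and, mem_erase, mem_Iic] at hp ⊢
    rw [Fin.lt_def] at *
    refine ⟨?_, ?_, Fin.le_def.mpr (by omega)⟩ <;> rintro rfl <;> omega
  have := card_le_card hsub
  rw [card_erase_of_mem (by simp [hij.ne']), card_erase_of_mem (by simp [hij.le]),
    card_filter_apply_lt, Fin.card_Iic] at this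
  omega

lemma exists_lt_lt_apply_gt_of_apply_add_one_lt {σ : Perm (Fin n)} {k : Fin n}
    (hk : (σ k : ℕ) + 1 < k) : ∃ i j, i < j ∧ j < k ∧ σ k < σ i ∧ σ k < σ j := by
  have hsplit := card_filter_add_card_filter_not (s := Iio k) (fun p => σ k < σ p)
  have hbelow : #{p ∈ Iio k | ¬σ k < σ p} ≤ σ k := by
    rw [← card_filter_apply_lt σ (σ k)]
    refine card_le_card fun p hp => ?_
    simp only [mem_filter, mem_Iio, mem_univ, true_and, not_lt] at hp ⊢
    exact hp.2.lt_of_ne (σ.injective.ne hp.1.ne)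
  rw [Fin.card_Iio] at hsplit
  obtain ⟨a, ha, b, hb, hab⟩ := one_lt_card.mp (by omega : 1 < #{p ∈ Iio k | σ k < σ p})
  simp only [mem_filter, mem_Iio] at ha hb
  rcases hab.lt_or_gt with h | h
  · exact ⟨a, b, h, hb.1, ha.2, hb.2⟩
  · exact ⟨b, a, h, ha.1, hb.2, ha.2⟩

lemma avoids321_and_avoids231_iff_not_exists (σ : Perm (Fin n)) :
    avoids321 σ ∧ avoids231 σ ↔ ¬∃ i j k, i < j ∧ j < k ∧ σ k < σ i ∧ σ k < σ j := by
  simp only [avoids321, avoids231, ← not_or, ← exists_or]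
  refine not_congr (exists₃_congr fun i j k => ?_)
  constructor
  · rintro (⟨hij, hjk, h1, h2⟩ | ⟨hij, hjk, h1, h2⟩)
    · exact ⟨hij, hjk, h1.trans h2, h1⟩
    · exact ⟨hij, hjk, h1, h1.trans h2⟩
  · rintro ⟨hij, hjk, hi, hj⟩
    rcases lt_or_gt_of_ne (σ.injective.ne hij.ne) with h | h
    · exact Or.inr ⟨hij, hjk, hi, h⟩
    · exact Or.inl ⟨hij, hjk, hj, h⟩

lemma avoids321_and_avoids231_iff_dropsAtMostOne (σ : Perm (Fin n)) :
    avoids321 σ ∧ avoids231 σ ↔ DropsAtMostOne σ := by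
  rw [avoids321_and_avoids231_iff_not_exists]
  constructor
  · intro h k
    by_contra! hk
    obtain ⟨i, j, hij, hjk, hi, hj⟩ := exists_lt_lt_apply_gt_of_apply_add_one_lt hk
    exact h ⟨i, j, k, hij, hjk, hi, hj⟩
  · rintro hσ ⟨i, j, k, hij, hjk, hi, hj⟩
    have := hσ k
    have := hσ.apply_le_of_lt_apply hij (by rw [Fin.lt_def] at *; omega)
    rw [Fin.lt_def, Fin.le_def] at *
    omega

def IsDrop (σ : Perm (Fin n)) (j : Fin n) : Prop := (σ j : ℕ) + 1 = j

noncomputable def doubleDrops (σ : Perm (Fin n)) : ℕ := #{j | σ.IsDrop j ∧ σ.IsDrop (σ j)}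

lemma not_isDrop_zero (σ : Perm (Fin (n + 1))) : ¬σ.IsDrop 0 := by
  simp [IsDrop]

lemma DropsAtMostOne.isDrop_symm_zero_iff {σ : Perm (Fin (n + 1))} (hσ : DropsAtMostOne σ) :
    σ.IsDrop (σ.symm 0) ↔ σ 0 ≠ 0 := by
  have := hσ (σ.symm 0)
  rw [IsDrop, apply_symm_apply, ne_eq, ← σ.eq_symm_apply, eq_comm, Fin.ext_iff] at *
  simp only [Fin.val_zero] at *
  omega

lemma card_filter_isDrop_and_apply_eq_zero {σ : Perm (Fin (n + 1))} (hσ : DropsAtMostOne σ) :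
    #{i | σ.IsDrop i ∧ σ i = 0} = if σ 0 = 0 then 0 else 1 := by
  have hset : ({i | σ.IsDrop i ∧ σ i = 0} : Finset (Fin (n + 1))) =
      if σ.IsDrop (σ.symm 0) then {σ.symm 0} else ∅ := by
    ext i
    rw [mem_filter, ← σ.eq_symm_apply]
    split_ifs with h <;> constructor <;> aesop
  rw [hset, hσ.isDrop_symm_zero_iff]
  split_ifs <;> simp_all

lemma DropsAtMostOne.isCrossing_iff {σ : Perm (Fin n)} (hσ : DropsAtMostOne σ) (i j : Fin n) :
    isCrossing σ i j ↔ σ j = i ∧ σ.IsDrop j ∧ σ.IsDrop i := by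
  unfold isCrossing IsDrop
  constructor
  · rintro (⟨hij, hj, hi⟩ | ⟨hi, hj, hij⟩)
    · exact absurd (hσ.apply_le_of_lt_apply hij hj) (hj.trans hi).not_ge
    · have := hσ i
      have := hσ j
      rw [Fin.lt_def, Fin.le_def] at *
      refine ⟨Fin.ext (by omega), by omega, by omega⟩
  · rintro ⟨rfl, hj, hi⟩
    right
    rw [Fin.lt_def, Fin.le_def]
    omega

lemma DropsAtMostOne.crs_eq_doubleDrops {σ : Perm (Fin n)} (hσ : DropsAtMostOne σ) :
    crs σ = doubleDrops σ := by
  have hcross : ({p | isCrossing σ p.1 p.2} : Finset (Fin n × Fin n)) =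
      ({j | σ.IsDrop j ∧ σ.IsDrop (σ j)} : Finset (Fin n)).image fun j => (σ j, j) := by
    ext ⟨i, j⟩
    simp only [mem_filter, mem_univ, true_and, mem_image, Prod.mk.injEq, hσ.isCrossing_iff]
    constructor
    · rintro ⟨rfl, hj, hi⟩
      exact ⟨j, ⟨hj, hi⟩, rfl, rfl⟩
    · rintro ⟨j, ⟨hj, hi⟩, rfl, rfl⟩
      exact ⟨rfl, hj, hi⟩
  rw [crs, hcross, card_image_of_injective _ fun _ _ h => (Prod.mk.inj h).2, doubleDrops]

noncomputable def dropWeight (σ : Perm (Fin n)) : ℤ[X] :=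
  if DropsAtMostOne σ then X ^ doubleDrops σ else 0

lemma dropWeight_one : dropWeight (1 : Perm (Fin n)) = 1 := by
  have hdrops : DropsAtMostOne (1 : Perm (Fin n)) := fun i => by simp
  have hdouble : doubleDrops (1 : Perm (Fin n)) = 0 := by simp [doubleDrops, IsDrop]
  rw [dropWeight, if_pos hdrops, hdouble, pow_zero]

section PrependFixedPoint

variable (e : Perm (Fin n))

lemma decomposeFin_symm_zero_apply_succ (i : Fin n) :
    decomposeFin.symm (0, e) i.succ = (e i).succ := by
  rw [decomposeFin_symm_apply_succ, swap_self, refl_apply]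

lemma dropsAtMostOne_decomposeFin_symm_zero_iff :
    DropsAtMostOne (decomposeFin.symm (0, e)) ↔ DropsAtMostOne e := by
  simp only [DropsAtMostOne, Fin.forall_fin_succ, decomposeFin_symm_apply_zero,
    decomposeFin_symm_zero_apply_succ, Fin.val_succ, Fin.val_zero, zero_le, true_and,
    add_le_add_iff_right]

lemma isDrop_decomposeFin_symm_zero_succ_iff (i : Fin n) :
    (decomposeFin.symm (0, e)).IsDrop i.succ ↔ e.IsDrop i := by
  simp [IsDrop]

lemma doubleDrops_decomposeFin_symm_zero :
    doubleDrops (decomposeFin.symm (0, e)) = doubleDrops e := by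
  rw [doubleDrops, doubleDrops, Fin.univ_succ,
    filter_cons_of_neg _ _ _ _ (by simp [not_isDrop_zero]), filter_map, card_map]
  congr 1
  refine filter_congr fun i _ => ?_
  simp only [Function.comp_apply, Function.Embedding.coeFn_mk, decomposeFin_symm_zero_apply_succ,
    isDrop_decomposeFin_symm_zero_succ_iff]

lemma dropWeight_decomposeFin_symm_zero :
    dropWeight (decomposeFin.symm (0, e)) = dropWeight e := by
  rw [dropWeight, dropWeight, dropsAtMostOne_decomposeFin_symm_zero_iff,
    doubleDrops_decomposeFin_symm_zero]

end PrependFixedPoint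

section ExtendFirstBlock

variable (e : Perm (Fin (n + 1)))

lemma decomposeFin_symm_succ_apply_zero_apply_succ (i : Fin (n + 1)) :
    decomposeFin.symm ((e 0).succ, e) i.succ = if i = 0 then 0 else (e i).succ := by
  rw [decomposeFin_symm_apply_succ]
  split_ifs with hi
  · rw [hi, swap_apply_right]
  · exact swap_apply_of_ne_of_ne (Fin.succ_ne_zero _) (by simpa using e.injective.ne hi)

lemma isDrop_decomposeFin_symm_succ_apply_zero_succ_iff (i : Fin (n + 1)) :
    (decomposeFin.symm ((e 0).succ, e)).IsDrop i.succ ↔ i = 0 ∨ e.IsDrop i := by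
  rw [IsDrop, decomposeFin_symm_succ_apply_zero_apply_succ]
  split_ifs with hi
  · simp [hi]
  · simp [IsDrop, hi]

lemma dropsAtMostOne_decomposeFin_symm_succ_apply_zero_iff :
    DropsAtMostOne (decomposeFin.symm ((e 0).succ, e)) ↔ DropsAtMostOne e := by
  unfold DropsAtMostOne
  rw [Fin.forall_fin_succ]
  simp only [Fin.val_zero, zero_le, true_and, decomposeFin_symm_succ_apply_zero_apply_succ]
  refine forall_congr' fun i => ?_
  split_ifs with hi
  · simp [hi]
  · simp

lemma not_dropsAtMostOne_decomposeFin_symm_succ {q : Fin (n + 1)} (hq : q ≠ e 0) :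
    ¬DropsAtMostOne (decomposeFin.symm (q.succ, e)) := by
  set σ := decomposeFin.symm (q.succ, e)
  intro hσ
  have hdrop := hσ.isDrop_symm_zero_iff.mpr (by simp [σ, decomposeFin_symm_apply_zero])
  have hone : σ.symm 0 = 1 := by
    rw [IsDrop, apply_symm_apply] at hdrop
    exact Fin.ext (by simpa using hdrop.symm)
  have : σ 1 = 0 := by rw [← hone, apply_symm_apply]
  rw [decomposeFin_symm_apply_one, swap_apply_of_ne_of_ne (Fin.succ_ne_zero _)
    (by simpa using hq.symm)] at this
  exact Fin.succ_ne_zero _ this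

variable {e} in
lemma doubleDrops_decomposeFin_symm_succ_apply_zero (he : DropsAtMostOne e) :
    doubleDrops (decomposeFin.symm ((e 0).succ, e)) = doubleDrops e + if e 0 = 0 then 0 else 1 := by
  set τ := decomposeFin.symm ((e 0).succ, e)
  have hsucc : ∀ i, τ.IsDrop i.succ ∧ τ.IsDrop (τ i.succ) ↔
      e.IsDrop i ∧ e.IsDrop (e i) ∨ e.IsDrop i ∧ e i = 0 := by
    intro i
    rw [decomposeFin_symm_succ_apply_zero_apply_succ]
    split_ifs with hi
    · simp [hi, not_isDrop_zero]
    · rw [isDrop_decomposeFin_symm_succ_apply_zero_succ_iff,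
        isDrop_decomposeFin_symm_succ_apply_zero_succ_iff]
      tauto
  rw [doubleDrops, Fin.univ_succ, filter_cons_of_neg _ _ _ _ (by simp [not_isDrop_zero]),
    filter_map, card_map, ← card_filter_isDrop_and_apply_eq_zero he, doubleDrops,
    ← card_union_of_disjoint (disjoint_filter.mpr fun i _ h h' => ?_), ← filter_or]
  · congr 1
    exact filter_congr fun i _ => hsucc i
  · rw [h'.2] at h
    exact not_isDrop_zero e h.2

lemma dropWeight_decomposeFin_symm_succ (q : Fin (n + 1)) :
    dropWeight (decomposeFin.symm (q.succ, e)) =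
      if q = e 0 then (if e 0 = 0 then 1 else X) * dropWeight e else 0 := by
  by_cases hq : q = e 0
  · subst hq
    rw [if_pos rfl, dropWeight, dropWeight, dropsAtMostOne_decomposeFin_symm_succ_apply_zero_iff]
    split_ifs with he h0
    · rw [doubleDrops_decomposeFin_symm_succ_apply_zero he, if_pos h0, add_zero, one_mul]
    · rw [doubleDrops_decomposeFin_symm_succ_apply_zero he, if_neg h0, pow_succ, mul_comm]
    all_goals rw [mul_zero]
  · rw [if_neg hq, dropWeight, if_neg (not_dropsAtMostOne_decomposeFin_symm_succ e hq)]

end ExtendFirstBlock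

lemma sum_dropWeight_decomposeFin_symm (e : Perm (Fin (n + 1))) :
    ∑ p, dropWeight (decomposeFin.symm (p, e)) =
      (1 + if e 0 = 0 then 1 else X) * dropWeight e := by
  simp only [Fin.sum_univ_succ, dropWeight_decomposeFin_symm_zero,
    dropWeight_decomposeFin_symm_succ, sum_ite_eq', mem_univ, if_true]
  ring

end Equiv.Perm

open Equiv.Perm

lemma F321231_eq_sum_dropWeight (n : ℕ) : F321231 n = ∑ σ : Perm (Fin n), dropWeight σ := by
  rw [F321231, sum_filter]
  refine sum_congr rfl fun σ _ => ?_
  simp only [dropWeight, avoids321_and_avoids231_iff_dropsAtMostOne]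
  split_ifs with hσ
  · rw [hσ.crs_eq_doubleDrops]
  · rfl

lemma F321231_of_le_one {n : ℕ} (hn : n ≤ 1) : F321231 n = 1 := by
  have : Subsingleton (Fin n) := Fin.subsingleton_iff_le_one.mpr hn
  rw [F321231_eq_sum_dropWeight, Fintype.sum_subsingleton _ 1, dropWeight_one]

lemma sum_dropWeight_of_apply_zero_eq_zero (n : ℕ) :
    ∑ e : Perm (Fin (n + 1)), (if e 0 = 0 then dropWeight e else 0) = F321231 n := by
  rw [F321231_eq_sum_dropWeight, ← decomposeFin.symm.sum_comp, Fintype.sum_prod_type,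
    Fin.sum_univ_succ]
  simp [decomposeFin_symm_apply_zero, dropWeight_decomposeFin_symm_zero]

lemma F321231_add_two (n : ℕ) :
    F321231 (n + 2) = (1 + X) * F321231 (n + 1) + (1 - X) * F321231 n := by
  have hsplit : ∀ e : Perm (Fin (n + 1)), (1 + if e 0 = 0 then 1 else X) * dropWeight e =
      (1 + X) * dropWeight e + (1 - X) * if e 0 = 0 then dropWeight e else 0 := by
    intro e
    split_ifs <;> ring
  rw [F321231_eq_sum_dropWeight, ← decomposeFin.symm.sum_comp, Fintype.sum_prod_type_right]
  simp only [sum_dropWeight_decomposeFin_symm, hsplit, sum_add_distrib, ← mul_sum,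
    ← F321231_eq_sum_dropWeight, sum_dropWeight_of_apply_zero_eq_zero]

theorem recurrence_321_231 :
    (∀ n : ℕ, 2 ≤ n →
        F321231 n = (1 + Polynomial.X) * F321231 (n - 1) +
          (1 - Polynomial.X) * F321231 (n - 2)) ∧
      F321231 0 = 1 ∧ F321231 1 = 1 := by
  refine ⟨fun n hn => ?_, F321231_of_le_one zero_le_one, F321231_of_le_one le_rfl⟩
  obtain ⟨m, rfl⟩ := Nat.exists_eq_add_of_le' hn
  exact F321231_add_two m
end

section
/- Let F_n(q) = ∑_{σ∈S_n(123,132)} q^{crs(σ)}. Then for all n ≥ 2, F_n(q) = (1+q)·F_{n−1}(q) + 1 − q, and consequently q·F_n(q) = (1+q)^{n−1} − 1 + q for all n ≥ 1. -/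
open Finset Polynomial Equiv

attribute [local instance] Classical.propDecidable

noncomputable def F123132 (n : ℕ) : Polynomial ℤ :=
  ∑ σ ∈ Finset.univ.filter (fun σ : Equiv.Perm (Fin n) => avoids123 σ ∧ avoids132 σ),
    (Polynomial.X : Polynomial ℤ) ^ crs σ


noncomputable section

def hh (n a b : ℕ) : ℕ :=
  if a + b + 1 ≤ n then min (b - a - 1) (n - 1 - a - b) else min (b - a - 1) (a + b - n)

noncomputable def PP (n a : ℕ) : Polynomial ℤ :=
  X ^ hh n a n + ∑ b ∈ (Finset.Icc (a+1) (n-1)).attach, X ^ hh n a b.1 * PP n b.1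
termination_by n - a
decreasing_by
  have hb := Finset.mem_Icc.1 b.2
  omega

theorem PP_eq (n a : ℕ) : PP n a =
    X ^ hh n a n + ∑ b ∈ Finset.Icc (a+1) (n-1), X ^ hh n a b * PP n b := by
  rw [PP, Finset.sum_attach _ (fun b => (X:Polynomial ℤ) ^ hh n a b * PP n b)]

theorem tel (c t : ℕ) (h : t ≤ c + 1) :
    ∑ j ∈ Finset.range t, (X:Polynomial ℤ) ^ j * (1 + X) ^ (c - j)
      = (1 + X) ^ (c + 1) - X ^ t * (1 + X) ^ (c + 1 - t) := by
  induction t with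
  | zero => simp
  | succ t ih =>
    rw [Finset.sum_range_succ, ih (by omega)]
    have h1 : c + 1 - t = (c - t) + 1 := by omega
    have h2 : c + 1 - (t + 1) = c - t := by omega
    rw [h1, h2, pow_succ, pow_succ]
    ring

theorem Pform1 (n a : ℕ) (h1 : a < n) (h2 : n ≤ 2*a+1) :
    PP n a = (1 + X) ^ (n - 1 - a) := by
  rw [PP_eq]
  have hterm : hh n a n = n - 1 - a := by
    unfold hh
    rw [if_neg (by omega)]
    have : a + n - n = a := by omega
    rw [this, Nat.min_eq_left (by omega)]
    omega
  have hsum : ∀ b ∈ Finset.Icc (a+1) (n-1),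
      (X:Polynomial ℤ) ^ hh n a b * PP n b = X ^ (b - a - 1) * (1+X) ^ (n - 1 - b) := by
    intro b hb
    have hb' := Finset.mem_Icc.1 hb
    have hhb : hh n a b = b - a - 1 := by
      unfold hh
      split_ifs with hc
      · rw [Nat.min_eq_left (by omega)]
      · rw [Nat.min_eq_left (by omega)]
    rw [hhb, Pform1 n b (by omega) (by omega)]
  rw [Finset.sum_congr rfl hsum]
  have hIcc : Finset.Icc (a+1) (n-1) = Finset.Ico (a+1) n := by
    rw [← Finset.Ico_add_one_right_eq_Icc]
    congr 1
    omega
  rw [hIcc, Finset.sum_Ico_eq_sum_range]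
  have hre : ∀ j ∈ Finset.range (n - (a+1)),
      (X:Polynomial ℤ) ^ (a + 1 + j - a - 1) * (1+X) ^ (n - 1 - (a + 1 + j))
        = X ^ j * (1+X) ^ ((n - a - 2) - j) := by
    intro j hj
    have hj' := Finset.mem_range.1 hj
    congr 2 <;> omega
  rw [Finset.sum_congr rfl hre]
  have hn : n - (a+1) = (n - a - 2) + 1 ∨ (n - (a+1) = 0 ∧ n - a - 2 = 0) := by omega
  rcases hn with hn | ⟨hn, hn2⟩
  · rw [hn, tel (n - a - 2) ((n-a-2)+1) (by omega), hterm]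
    have e1 : n - a - 2 + 1 = n - 1 - a := by omega
    rw [e1]
    have e2 : n - 1 - a - (n - 1 - a) = 0 := by omega
    rw [e2, pow_zero, mul_one]
    ring
  · -- a = n-1 : empty sum
    rw [hn, hterm]
    simp only [Finset.range_zero, Finset.sum_empty, add_zero]
    have : n - 1 - a = 0 := by omega
    rw [this]
    simp
termination_by n - a
decreasing_by
  omega

theorem lemC (d a t s : ℕ) (ht : t = a + d) (hs : s = t ∨ s = t + 1) :
    X * ∑ j ∈ Finset.Icc a t, (X:Polynomial ℤ)^(j-a) * (1+X)^j
      = X^(s-a) * (1+X)^(t+1) - (1+X)^a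
        + ∑ b ∈ Finset.Ioc a s, X^(b-a-1) * ((1-X) * (1+X)^b) := by
  induction d generalizing a t with
  | zero =>
    have hta : t = a := by omega
    subst hta
    rcases hs with hs | hs <;> subst hs
    · simp only [Finset.Icc_self, Finset.sum_singleton, Nat.sub_self, pow_zero, one_mul,
        Finset.Ioc_self, Finset.sum_empty, add_zero, pow_succ]
      ring
    · have h1 : Finset.Ioc t (t+1) = {t+1} := by
        ext x; simp [Finset.mem_Ioc]
      have h2 : t + 1 - t = 1 := by omega
      have h3 : t + 1 - t - 1 = 0 := by omega
      simp only [Finset.Icc_self, Finset.sum_singleton, Nat.sub_self, pow_zero, one_mul,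
        h1, h2, h3, pow_one, pow_succ]
      ring
  | succ d ih =>
    have h1 : Finset.Icc a t = insert a (Finset.Icc (a+1) t) := by
      ext x; simp [Finset.mem_Icc, Finset.mem_insert]; omega
    have h2 : Finset.Ioc a s = insert (a+1) (Finset.Ioc (a+1) s) := by
      ext x; simp [Finset.mem_Ioc, Finset.mem_insert]; omega
    rw [h1, h2, Finset.sum_insert (by simp), Finset.sum_insert (by simp)]
    have h3 : ∀ j ∈ Finset.Icc (a+1) t, (X:Polynomial ℤ)^(j-a) * (1+X)^j
        = X * (X^(j-(a+1)) * (1+X)^j) := by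
      intro j hj
      have := Finset.mem_Icc.1 hj
      have e : j - a = (j - (a+1)) + 1 := by omega
      rw [e, pow_succ]; ring
    rw [Finset.sum_congr rfl h3, ← Finset.mul_sum]
    have h4 : ∀ b ∈ Finset.Ioc (a+1) s, (X:Polynomial ℤ)^(b-a-1) * ((1-X) * (1+X)^b)
        = X * (X^(b-(a+1)-1) * ((1-X) * (1+X)^b)) := by
      intro b hb
      have := Finset.mem_Ioc.1 hb
      have e : b - a - 1 = (b - (a+1) - 1) + 1 := by omega
      rw [e, pow_succ]; ring
    rw [Finset.sum_congr rfl h4, ← Finset.mul_sum]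
    have hIH := ih (a+1) t (by omega) hs
    have e1 : s - a = (s - (a+1)) + 1 := by omega
    have e2 : a + 1 - a - 1 = 0 := by omega
    rw [e1, pow_succ, Nat.sub_self, pow_zero, pow_succ, e2, pow_zero]
    linear_combination (X : Polynomial ℤ) * hIH

theorem Pform2 (n a : ℕ) (h1 : a < n) (h2 : 2*a+1 ≤ n) :
    X * PP n a = (1+X)^(n-1-a) - (1-X)*(1+X)^a := by
  rcases eq_or_lt_of_le h2 with hb | hlt
  · -- boundary 2a+1 = n
    rw [Pform1 n a h1 (by omega)]
    have e : n - 1 - a = a := by omega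
    rw [e]; ring
  -- now 2a+2 ≤ n
  obtain ⟨k, hkk⟩ : ∃ k, n - 1 = 2*k ∨ n - 1 = 2*k + 1 := by
    rcases Nat.even_or_odd (n-1) with ⟨k, hk⟩ | ⟨k, hk⟩
    · exact ⟨k, Or.inl (by omega)⟩
    · exact ⟨k, Or.inr (by omega)⟩
  have hak : a ≤ k := by omega
  have hk2 : k ≤ n - 1 - a := by omega
  have hk3 : n - 1 - a ≤ n - 1 := by omega
  rw [PP_eq, mul_add]
  have hterm : hh n a n = a := by
    unfold hh
    rw [if_neg (by omega)]
    have e : a + n - n = a := by omega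
    rw [e, Nat.min_eq_right (by omega)]
  rw [hterm]
  have hIcc : Finset.Icc (a+1) (n-1) = Finset.Ioc a (n-1) := by
    ext x; simp [Finset.mem_Icc, Finset.mem_Ioc]
  rw [hIcc, ← Finset.sum_Ioc_consecutive _ (le_trans hak hk2) hk3,
      ← Finset.sum_Ioc_consecutive _ hak hk2, mul_add, mul_add,
      Finset.mul_sum, Finset.mul_sum, Finset.mul_sum]
  -- Region 1 : a < b ≤ k
  have hS1 : ∑ b ∈ Finset.Ioc a k, X * ((X:Polynomial ℤ) ^ hh n a b * PP n b)
      = ((1+X)^(n-1-a) - X^(k-a) * (1+X)^(n-1-k))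
        - ∑ b ∈ Finset.Ioc a k, X^(b-a-1) * ((1-X) * (1+X)^b) := by
    have hterms : ∀ b ∈ Finset.Ioc a k, X * ((X:Polynomial ℤ) ^ hh n a b * PP n b)
        = X^(b-a-1) * (1+X)^(n-1-b) - X^(b-a-1) * ((1-X) * (1+X)^b) := by
      intro b hb
      have hb' := Finset.mem_Ioc.1 hb
      have hhb : hh n a b = b - a - 1 := by
        unfold hh
        rw [if_pos (by omega), Nat.min_eq_left (by omega)]
      have hrec := Pform2 n b (by omega) (by omega)
      rw [hhb, mul_left_comm, hrec]
      ring
    rw [Finset.sum_congr rfl hterms, Finset.sum_sub_distrib]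
    congr 1
    have hIoc : Finset.Ioc a k = Finset.Ico (a+1) (k+1) := by
      ext x; simp [Finset.mem_Ioc, Finset.mem_Ico]
    rw [hIoc, Finset.sum_Ico_eq_sum_range]
    have hre : ∀ j ∈ Finset.range (k + 1 - (a+1)),
        (X:Polynomial ℤ) ^ (a + 1 + j - a - 1) * (1+X) ^ (n - 1 - (a + 1 + j))
          = X ^ j * (1+X) ^ ((n - a - 2) - j) := by
      intro j hj
      have := Finset.mem_range.1 hj
      congr 2 <;> omega
    rw [Finset.sum_congr rfl hre]
    have e0 : k + 1 - (a+1) = k - a := by omega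
    rw [e0, tel (n-a-2) (k-a) (by omega)]
    have e1 : n - a - 2 + 1 = n - 1 - a := by omega
    rw [e1]
    have e2 : n - 1 - a - (k - a) = n - 1 - k := by omega
    rw [e2]
  -- Region 2 : k < b ≤ n-1-a
  have hS2 : ∑ b ∈ Finset.Ioc k (n-1-a), X * ((X:Polynomial ℤ) ^ hh n a b * PP n b)
      = X * ∑ j ∈ Finset.Icc a (n-2-k), (X:Polynomial ℤ)^(j-a) * (1+X)^j := by
    rw [Finset.mul_sum]
    refine Finset.sum_nbij' (i := fun b => n-1-b) (j := fun c => n-1-c) ?_ ?_ ?_ ?_ ?_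
    · intro b hb
      have := Finset.mem_Ioc.1 hb
      simp only [Finset.mem_Icc]
      omega
    · intro c hc
      have := Finset.mem_Icc.1 hc
      simp only [Finset.mem_Ioc]
      omega
    · intro b hb
      have := Finset.mem_Ioc.1 hb
      omega
    · intro c hc
      have := Finset.mem_Icc.1 hc
      omega
    · intro b hb
      have hb' := Finset.mem_Ioc.1 hb
      have hle : n - 1 - a - b ≤ b - a - 1 := by omega
      have hhb : hh n a b = n - 1 - a - b := by
        unfold hh
        rw [if_pos (by omega), Nat.min_eq_right hle]
      have hrec := Pform1 n b (by omega) (by omega)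
      rw [hhb, hrec]
      have e1 : n - 1 - b - a = n - 1 - a - b := by omega
      rw [e1]
  -- Region 3 : n-1-a < b ≤ n-1
  have hS3 : ∑ b ∈ Finset.Ioc (n-1-a) (n-1), X * ((X:Polynomial ℤ) ^ hh n a b * PP n b)
      = X * (1+X)^a - X^(a+1) := by
    have hterms : ∀ b ∈ Finset.Ioc (n-1-a) (n-1), X * ((X:Polynomial ℤ) ^ hh n a b * PP n b)
        = X^(a+b-n+1) * (1+X)^(n-1-b) := by
      intro b hb
      have hb' := Finset.mem_Ioc.1 hb
      have hhb : hh n a b = a + b - n := by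
        unfold hh
        rw [if_neg (by omega), Nat.min_eq_right (by omega)]
      have hrec := Pform1 n b (by omega) (by omega)
      rw [hhb, hrec, pow_succ]
      ring
    rw [Finset.sum_congr rfl hterms]
    have hIoc : Finset.Ioc (n-1-a) (n-1) = Finset.Ico (n-a) n := by
      ext x; simp [Finset.mem_Ioc, Finset.mem_Ico]; omega
    rw [hIoc, Finset.sum_Ico_eq_sum_range]
    have hre : ∀ j ∈ Finset.range (n - (n - a)),
        (X:Polynomial ℤ) ^ (a + (n - a + j) - n + 1) * (1+X) ^ (n - 1 - (n - a + j))
          = X * (X ^ j * (1+X) ^ ((a-1) - j)) := by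
      intro j hj
      have := Finset.mem_range.1 hj
      have e1 : a + (n - a + j) - n + 1 = j + 1 := by omega
      have e2 : n - 1 - (n - a + j) = a - 1 - j := by omega
      rw [e1, e2, pow_succ]
      ring
    rw [Finset.sum_congr rfl hre, ← Finset.mul_sum]
    have e0 : n - (n - a) = a := by omega
    rw [e0]
    rcases Nat.eq_zero_or_pos a with ha | ha
    · subst ha; simp
    · rw [tel (a-1) a (by omega)]
      have e1 : a - 1 + 1 = a := by omega
      rw [e1, Nat.sub_self, pow_zero, mul_one]
      ring
  rw [hS1, hS2, hS3]
  have hC := lemC ((n-2-k) - a) a (n-2-k) k (by omega) (by omega)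
  have e1 : n - 2 - k + 1 = n - 1 - k := by omega
  rw [e1] at hC
  linear_combination hC

theorem Pfinal (n : ℕ) (hn : 1 ≤ n) :
    X * PP n 0 = (1 + X)^(n-1) - 1 + X := by
  have := Pform2 n 0 (by omega) (by omega)
  rw [this]
  simp only [Nat.sub_zero, pow_zero, mul_one]
  ring


/-- largest "block start" `≤ i`, among `a` and elements of `c` -/
def stR (a : ℕ) (c : Finset ℕ) (i : ℕ) : ℕ :=
  (insert a (c.filter (· ≤ i))).max' (Finset.insert_nonempty _ _)

lemma stR_ge (a : ℕ) (c : Finset ℕ) (i : ℕ) : a ≤ stR a c i :=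
  Finset.le_max' _ a (Finset.mem_insert_self _ _)

lemma stR_le (a : ℕ) (c : Finset ℕ) (i : ℕ) (h : a ≤ i) : stR a c i ≤ i := by
  apply Finset.max'_le
  intro y hy
  rcases Finset.mem_insert.1 hy with rfl | hy
  · exact h
  · exact (Finset.mem_filter.1 hy).2

lemma stR_mem (a : ℕ) (c : Finset ℕ) (i : ℕ) : stR a c i = a ∨ stR a c i ∈ c := by
  rcases Finset.mem_insert.1 (Finset.max'_mem _ (Finset.insert_nonempty a (c.filter (· ≤ i)))) with
    h | h
  · exact Or.inl h
  · exact Or.inr (Finset.mem_filter.1 h).1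

lemma stR_le_sR (a : ℕ) (c : Finset ℕ) (i : ℕ) (x : ℕ) (hx : x ∈ c) (hxi : x ≤ i) :
    x ≤ stR a c i := by
  apply Finset.le_max'
  exact Finset.mem_insert_of_mem (Finset.mem_filter.2 ⟨hx, hxi⟩)

/-- `i` is the last element of some block -/
def isEnd (n : ℕ) (c : Finset ℕ) (i : ℕ) : Prop := i + 1 = n ∨ i + 1 ∈ c

def fct (n : ℕ) (c : Finset ℕ) (i : ℕ) : ℕ :=
  if isEnd n c i then n - 1 - stR 0 c i else n - 2 - i

lemma mid_le (n : ℕ) (c : Finset ℕ) (i : ℕ) (hi : i < n) (h : ¬ isEnd n c i) : i ≤ n - 2 := by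
  unfold isEnd at h
  push_neg at h
  omega

lemma stR_ge_end (n : ℕ) (c : Finset ℕ) (i j : ℕ) (hij : i < j) (hjn : j < n)
    (hi : isEnd n c i) : i + 1 ≤ stR 0 c j := by
  rcases hi with hi | hi
  · omega
  · exact stR_le_sR 0 c j (i+1) hi (by omega)

/-- ends dominate everything after them -/
lemma fct_dom (n : ℕ) (c : Finset ℕ) (i j : ℕ) (hij : i < j) (hjn : j < n)
    (hi : isEnd n c i) : fct n c j < fct n c i := by
  have h1 : stR 0 c i ≤ i := stR_le 0 c i (by omega)
  have h2 : i + 1 ≤ stR 0 c j := stR_ge_end n c i j hij hjn hi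
  unfold fct
  rw [if_pos hi]
  by_cases hj : isEnd n c j
  · rw [if_pos hj]; omega
  · rw [if_neg hj]
    have := mid_le n c j hjn hj
    omega

lemma fct_lt_iff (n : ℕ) (c : Finset ℕ) (i j : ℕ) (hij : i < j) (hjn : j < n) :
    fct n c i < fct n c j ↔ (¬ isEnd n c i ∧ isEnd n c j ∧ stR 0 c j ≤ i) := by
  constructor
  · intro h
    by_cases hi : isEnd n c i
    · exact absurd h (not_lt.2 (le_of_lt (fct_dom n c i j hij hjn hi)))
    · refine ⟨hi, ?_, ?_⟩
      · by_cases hj : isEnd n c j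
        · exact hj
        · exfalso
          have hi2 := mid_le n c i (by omega) hi
          have hj2 := mid_le n c j hjn hj
          unfold fct at h
          rw [if_neg hi, if_neg hj] at h
          omega
      · by_cases hj : isEnd n c j
        · have hi2 := mid_le n c i (by omega) hi
          have h3 : stR 0 c j ≤ j := stR_le 0 c j (by omega)
          unfold fct at h
          rw [if_neg hi, if_pos hj] at h
          omega
        · exfalso
          have hi2 := mid_le n c i (by omega) hi
          have hj2 := mid_le n c j hjn hj
          unfold fct at h
          rw [if_neg hi, if_neg hj] at h
          omega
  · rintro ⟨hi, hj, hsj⟩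
    have hi2 := mid_le n c i (by omega) hi
    have h3 : stR 0 c j ≤ j := stR_le 0 c j (by omega)
    unfold fct
    rw [if_neg hi, if_pos hj]
    omega

lemma fct_ne (n : ℕ) (c : Finset ℕ) (i j : ℕ) (hij : i < j) (hjn : j < n) :
    fct n c i ≠ fct n c j := by
  by_cases hi : isEnd n c i
  · exact (Nat.ne_of_gt (fct_dom n c i j hij hjn hi))
  · by_cases hj : isEnd n c j
    · have hi2 := mid_le n c i (by omega) hi
      have h3 : stR 0 c j ≤ j := stR_le 0 c j (by omega)
      intro heq
      unfold fct at heq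
      rw [if_neg hi, if_pos hj] at heq
      have hs : stR 0 c j = i + 1 := by omega
      rcases stR_mem 0 c j with h | h
      · omega
      · rw [hs] at h
        exact hi (Or.inr h)
    · have hi2 := mid_le n c i (by omega) hi
      have hj2 := mid_le n c j hjn hj
      unfold fct
      rw [if_neg hi, if_neg hj]
      omega

lemma fct_lt_n (n : ℕ) (hn : 0 < n) (c : Finset ℕ) (i : ℕ) (hi : i < n) : fct n c i < n := by
  unfold fct
  split_ifs
  · omega
  · omega

/-- the permutation attached to a cut set -/
def pmc (n : ℕ) (hn : 0 < n) (c : Finset ℕ) : Equiv.Perm (Fin n) :=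
  Equiv.ofBijective (fun i => ⟨fct n c i.1, fct_lt_n n hn c i.1 i.2⟩)
    (Finite.injective_iff_bijective.1 (by
      intro i j hij
      by_contra hne
      have hv : fct n c i.1 = fct n c j.1 := by
        simpa [Fin.mk.injEq] using hij
      rcases lt_trichotomy i j with h | h | h
      · exact fct_ne n c i.1 j.1 h j.2 hv
      · exact hne h
      · exact fct_ne n c j.1 i.1 h i.2 hv.symm))

lemma pmc_apply (n : ℕ) (hn : 0 < n) (c : Finset ℕ) (i : Fin n) :
    ((pmc n hn c) i : ℕ) = fct n c i.1 := rfl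

/-- key: ascending pairs of pmc -/
lemma pmc_asc (n : ℕ) (hn : 0 < n) (c : Finset ℕ) (i j : Fin n) (hij : i < j)
    (hlt : pmc n hn c i < pmc n hn c j) :
    ¬ isEnd n c i.1 ∧ isEnd n c j.1 ∧ stR 0 c j.1 ≤ i.1 := by
  rw [Fin.lt_def] at hlt hij
  rw [pmc_apply, pmc_apply] at hlt
  exact (fct_lt_iff n c i.1 j.1 hij j.2).1 hlt

lemma pmc_avoids (n : ℕ) (hn : 0 < n) (c : Finset ℕ) :
    avoids123 (pmc n hn c) ∧ avoids132 (pmc n hn c) := by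
  have key : ∀ i j k : Fin n, i < j → j < k →
      pmc n hn c i < pmc n hn c j → pmc n hn c i < pmc n hn c k → False := by
    intro i j k hij hjk h1 h2
    obtain ⟨-, hje, -⟩ := pmc_asc n hn c i j hij h1
    obtain ⟨-, -, hks⟩ := pmc_asc n hn c i k (hij.trans hjk) h2
    have hj1 : j.1 + 1 ≤ stR 0 c k.1 := stR_ge_end n c j.1 k.1 (Fin.lt_def.1 hjk) k.2 hje
    have := Fin.lt_def.1 hij
    omega
  constructor
  · rintro ⟨i, j, k, hij, hjk, h1, h2⟩
    exact key i j k hij hjk h1 (h1.trans h2)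
  · rintro ⟨i, j, k, hij, hjk, h1, h2⟩
    exact key i j k hij hjk (h1.trans h2) h1

/-- the set of "right-to-left maxima" of a permutation, as cut set -/
def cOf {n : ℕ} (σ : Equiv.Perm (Fin n)) : Finset ℕ :=
  ((Finset.univ.filter (fun i : Fin n => ∀ j, i < j → σ j < σ i)).image
    (fun i : Fin n => (i : ℕ) + 1)).erase n

lemma mem_cOf {n : ℕ} (σ : Equiv.Perm (Fin n)) (x : ℕ) :
    x ∈ cOf σ ↔ x ≠ n ∧ ∃ i : Fin n, (∀ j, i < j → σ j < σ i) ∧ (i : ℕ) + 1 = x := by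
  simp only [cOf, Finset.mem_erase, Finset.mem_image, Finset.mem_filter, Finset.mem_univ,
    true_and]

lemma cOf_subset {n : ℕ} (σ : Equiv.Perm (Fin n)) : cOf σ ⊆ Finset.Icc 1 (n-1) := by
  intro x hx
  obtain ⟨hxn, i, -, hi⟩ := (mem_cOf σ x).1 hx
  have := i.2
  simp only [Finset.mem_Icc]
  omega

/-- E-characterisation for pmc -/
lemma pmc_E (n : ℕ) (hn : 0 < n) (c : Finset ℕ) (i : Fin n) :
    (∀ j, i < j → pmc n hn c j < pmc n hn c i) ↔ isEnd n c i.1 := by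
  constructor
  · intro h
    by_contra hi
    -- find the end of i's block
    have hne : ((insert n c).filter (fun b => i.1 < b)).Nonempty :=
      ⟨n, Finset.mem_filter.2 ⟨Finset.mem_insert_self _ _, i.2⟩⟩
    set e1 := ((insert n c).filter (fun b => i.1 < b)).min' hne with he1
    have he1mem := Finset.min'_mem _ hne
    rw [← he1] at he1mem
    have he1mem' := Finset.mem_filter.1 he1mem
    have he1min : ∀ x ∈ insert n c, i.1 < x → e1 ≤ x := by
      intro x hx hix
      exact Finset.min'_le _ x (Finset.mem_filter.2 ⟨hx, hix⟩)
    have he1i : i.1 < e1 := he1mem'.2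
    have he1n : e1 ≤ n := by
      rcases Finset.mem_insert.1 he1mem'.1 with h | h
      · omega
      · -- need e1 ≤ n ; if e1 ∈ c could exceed n? use min'_le with n
        exact he1min n (Finset.mem_insert_self _ _) i.2
    set e := e1 - 1 with he
    have hee : e + 1 = e1 := by omega
    have heEnd : isEnd n c e := by
      rcases Finset.mem_insert.1 he1mem'.1 with h | h
      · exact Or.inl (by omega)
      · exact Or.inr (by rw [hee]; exact h)
    have helt : e < n := by
      rcases heEnd with h | h
      · omega
      · -- e+1 ∈ c and also e1 ≤ n, e1 ≠ ... need e < n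
        omega
    have hest : stR 0 c e ≤ i.1 := by
      rcases stR_mem 0 c e with h | h
      · omega
      · by_contra hgt
        push_neg at hgt
        have h1 : stR 0 c e ≤ e := stR_le 0 c e (by omega)
        have := he1min (stR 0 c e) (Finset.mem_insert_of_mem h) hgt
        omega
    have hie : i.1 < e := by
      rcases Nat.lt_or_ge i.1 e with h | h
      · exact h
      · have : i.1 = e := by omega
        rw [← this] at heEnd
        exact absurd heEnd hi
    have hlt : fct n c i.1 < fct n c e :=
      (fct_lt_iff n c i.1 e hie helt).2 ⟨hi, heEnd, hest⟩
    have := h ⟨e, helt⟩ (by rw [Fin.lt_def]; exact hie)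
    rw [Fin.lt_def, pmc_apply, pmc_apply] at this
    simp only [Fin.val_mk] at this
    omega
  · intro hi j hj
    rw [Fin.lt_def, pmc_apply, pmc_apply]
    exact fct_dom n c i.1 j.1 (Fin.lt_def.1 hj) j.2 hi

lemma cOf_pmc (n : ℕ) (hn : 0 < n) (c : Finset ℕ) (hc : c ⊆ Finset.Icc 1 (n-1)) :
    cOf (pmc n hn c) = c := by
  ext x
  rw [mem_cOf]
  constructor
  · rintro ⟨hxn, i, hE, hix⟩
    have := (pmc_E n hn c i).1 hE
    rcases this with h | h
    · omega
    · rwa [hix] at h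
  · intro hx
    have hx' := Finset.mem_Icc.1 (hc hx)
    refine ⟨by omega, ⟨x - 1, by omega⟩, ?_, ?_⟩
    · rw [pmc_E n hn c]
      right
      show x - 1 + 1 ∈ c
      rw [Nat.sub_add_cancel hx'.1]
      exact hx
    · show x - 1 + 1 = x
      omega


/-! ### counting helpers -/

lemma card_lt_filter (n v : ℕ) (hv : v ≤ n) :
    (Finset.univ.filter (fun j : Fin n => (j:ℕ) < v)).card = v := by
  have key : (Finset.univ.filter (fun j : Fin n => (j:ℕ) < v)).card = (Finset.range v).card := by
    refine Finset.card_bij' (fun (j : Fin n) _ => (j:ℕ))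
      (fun x hx => (⟨x, by have := Finset.mem_range.1 hx; omega⟩ : Fin n)) ?_ ?_ ?_ ?_
    · intro a ha
      exact Finset.mem_range.2 (Finset.mem_filter.1 ha).2
    · intro x hx
      refine Finset.mem_filter.2 ⟨Finset.mem_univ _, ?_⟩
      exact Finset.mem_range.1 hx
    · intro a ha
      rfl
    · intro x hx
      rfl
  rw [key, Finset.card_range]

lemma card_ge_filter (n v : ℕ) (hv : v ≤ n) :
    (Finset.univ.filter (fun j : Fin n => v ≤ (j:ℕ))).card = n - v := by
  have h := Finset.card_filter_add_card_filter_not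
    (s := (Finset.univ : Finset (Fin n))) (p := fun j : Fin n => (j:ℕ) < v)
  have h2 : (Finset.univ.filter (fun j : Fin n => ¬ (j:ℕ) < v))
      = Finset.univ.filter (fun j : Fin n => v ≤ (j:ℕ)) := by
    apply Finset.filter_congr
    intro x _
    simp [not_lt]
  rw [h2, card_lt_filter n v hv, Finset.card_univ, Fintype.card_fin] at h
  omega

lemma card_sigma_ge {n : ℕ} (σ : Equiv.Perm (Fin n)) (v : ℕ) (hv : v ≤ n) :
    (Finset.univ.filter (fun l : Fin n => v ≤ (σ l : ℕ))).card = n - v := by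
  rw [← card_ge_filter n v hv]
  refine Finset.card_bij' (fun l _ => σ l) (fun l _ => σ.symm l) ?_ ?_ ?_ ?_
  · intro l hl
    exact Finset.mem_filter.2 ⟨Finset.mem_univ _, (Finset.mem_filter.1 hl).2⟩
  · intro l hl
    refine Finset.mem_filter.2 ⟨Finset.mem_univ _, ?_⟩
    have := (Finset.mem_filter.1 hl).2
    rwa [Equiv.apply_symm_apply]
  · intro l _
    exact Equiv.symm_apply_apply σ l
  · intro l _
    exact Equiv.apply_symm_apply σ l

lemma atmost1 {n : ℕ} (σ : Equiv.Perm (Fin n)) (h123 : avoids123 σ) (h132 : avoids132 σ) :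
    ∀ i j k : Fin n, i < j → j < k → σ i < σ j → σ i < σ k → False := by
  intro i j k hij hjk h1 h2
  rcases lt_trichotomy (σ j) (σ k) with h | h | h
  · exact h123 ⟨i, j, k, hij, hjk, h1, h⟩
  · exact absurd (σ.injective h) (Fin.ne_of_lt hjk)
  · exact h132 ⟨i, j, k, hij, hjk, h2, h⟩

lemma sigma_lower {n : ℕ} (σ : Equiv.Perm (Fin n)) (h123 : avoids123 σ) (h132 : avoids132 σ)
    (i : Fin n) : n - 2 - (i:ℕ) ≤ (σ i : ℕ) := by
  classical
  set B := Finset.univ.filter (fun j : Fin n => σ i < σ j) with hB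
  have hBcard : B.card = n - ((σ i : ℕ) + 1) := by
    rw [hB]
    have : (Finset.univ.filter (fun j : Fin n => σ i < σ j))
        = Finset.univ.filter (fun j : Fin n => ((σ i : ℕ) + 1) ≤ (σ j : ℕ)) := by
      apply Finset.filter_congr
      intro x _
      rw [Fin.lt_def]
      constructor <;> intro <;> omega
    rw [this, card_sigma_ge σ _ (by have := (σ i).2; omega)]
  have hBle : B.card ≤ (i:ℕ) + 1 := by
    by_cases hex : ∃ j : Fin n, i < j ∧ σ i < σ j
    · obtain ⟨j₀, hj₀i, hj₀⟩ := hex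
      have hsub : B ⊆ insert j₀ (Finset.univ.filter (fun l : Fin n => (l:ℕ) < (i:ℕ))) := by
        intro j hj
        have hjB := (Finset.mem_filter.1 hj).2
        rcases lt_trichotomy j i with h | h | h
        · exact Finset.mem_insert_of_mem
            (Finset.mem_filter.2 ⟨Finset.mem_univ _, Fin.lt_def.1 h⟩)
        · exact absurd hjB (by rw [h]; exact lt_irrefl _)
        · have hjj : j = j₀ := by
            rcases lt_trichotomy j j₀ with h' | h' | h'
            · exact absurd (atmost1 σ h123 h132 i j j₀ h h' hjB hj₀) id
            · exact h'
            · exact absurd (atmost1 σ h123 h132 i j₀ j hj₀i h' hj₀ hjB) id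
          rw [hjj]
          exact Finset.mem_insert_self _ _
      calc B.card ≤ _ := Finset.card_le_card hsub
        _ ≤ (Finset.univ.filter (fun l : Fin n => (l:ℕ) < (i:ℕ))).card + 1 :=
          Finset.card_insert_le _ _
        _ = (i:ℕ) + 1 := by rw [card_lt_filter n (i:ℕ) (by have := i.2; omega)]
    · push_neg at hex
      have hsub : B ⊆ Finset.univ.filter (fun l : Fin n => (l:ℕ) < (i:ℕ)) := by
        intro j hj
        have hjB := (Finset.mem_filter.1 hj).2
        rcases lt_trichotomy j i with h | h | h
        · exact Finset.mem_filter.2 ⟨Finset.mem_univ _, Fin.lt_def.1 h⟩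
        · exact absurd hjB (by rw [h]; exact lt_irrefl _)
        · exact absurd hjB (not_lt.2 (hex j h))
      calc B.card ≤ _ := Finset.card_le_card hsub
        _ = (i:ℕ) := card_lt_filter n (i:ℕ) (by have := i.2; omega)
        _ ≤ (i:ℕ) + 1 := by omega
  have := (σ i).2
  have := i.2
  omega


lemma isEnd_cOf {n : ℕ} (σ : Equiv.Perm (Fin n)) (i : ℕ) (hi : i < n) :
    isEnd n (cOf σ) i ↔ (∀ j, (⟨i, hi⟩ : Fin n) < j → σ j < σ ⟨i, hi⟩) := by
  constructor
  · rintro (h | h)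
    · intro j hj
      exfalso
      have := j.2
      rw [Fin.lt_def] at hj
      simp only [Fin.val_mk] at hj
      omega
    · obtain ⟨-, i', hE, hi'⟩ := (mem_cOf σ (i+1)).1 h
      have : (⟨i, hi⟩ : Fin n) = i' := by
        apply Fin.ext
        simp only [Fin.val_mk]
        omega
      rw [this]
      exact hE
  · intro h
    by_cases hlast : i + 1 = n
    · exact Or.inl hlast
    · exact Or.inr ((mem_cOf σ (i+1)).2 ⟨by omega, ⟨⟨i, hi⟩, h, rfl⟩⟩)

lemma main_structure {n : ℕ} (σ : Equiv.Perm (Fin n)) (h123 : avoids123 σ)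
    (h132 : avoids132 σ) :
    ∀ i : ℕ, ∀ hi : i < n,
      ((σ ⟨i, hi⟩ : ℕ) = fct n (cOf σ) i) ∧
      ((∀ j, (⟨i, hi⟩ : Fin n) < j → σ j < σ ⟨i, hi⟩) → ∀ v, n - 1 - i ≤ v → v < n →
        ∃ l, ∃ hl : l < n, l ≤ i ∧ (σ ⟨l, hl⟩ : ℕ) = v) := by
  intro i
  induction i using Nat.strong_induction_on with
  | _ i IH =>
  intro hi
  by_cases hE : ∀ j, (⟨i, hi⟩ : Fin n) < j → σ j < σ ⟨i, hi⟩
  · -- i is a right-to-left maximum (end of a block)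
    have hEnd : isEnd n (cOf σ) i := (isEnd_cOf σ i hi).2 hE
    have ha1 : stR 0 (cOf σ) i ≤ i := stR_le _ _ _ (Nat.zero_le _)
    set a := stR 0 (cOf σ) i with ha
    -- a-1 is a right-to-left maximum if a ≥ 1
    have ha2 : a = 0 ∨ (1 ≤ a ∧ ∃ ha' : a - 1 < n,
        (∀ j, (⟨a-1, ha'⟩ : Fin n) < j → σ j < σ ⟨a-1, ha'⟩)) := by
      rcases stR_mem 0 (cOf σ) i with h | h
      · exact Or.inl h
      · right
        obtain ⟨hne, i', hE', hi'⟩ := (mem_cOf σ a).1 h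
        have hv : 1 ≤ a := by omega
        have ha' : a - 1 < n := by have := i'.2; omega
        refine ⟨hv, ha', ?_⟩
        have : (⟨a-1, ha'⟩ : Fin n) = i' := by
          apply Fin.ext
          simp only [Fin.val_mk]
          omega
        rw [this]
        exact hE'
    have hmidE : ∀ l, a ≤ l → l < i → ¬ isEnd n (cOf σ) l := by
      intro l hal hli hEl
      rcases hEl with h | h
      · omega
      · have := stR_le_sR 0 (cOf σ) i (l+1) h (by omega)
        omega
    have hf1 : ∀ l, a ≤ l → l < i → ∀ hl : l < n, (σ ⟨l, hl⟩ : ℕ) = n - 2 - l := by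
      intro l hal hli hl
      rw [(IH l hli hl).1]
      unfold fct
      rw [if_neg (hmidE l hal hli)]
    have hf3 : ∀ l, ∀ hl : l < n, l < a → n - a ≤ (σ ⟨l, hl⟩ : ℕ) := by
      intro l hl hla
      rw [(IH l (by omega) hl).1]
      unfold fct
      split_ifs with he
      · have := stR_le 0 (cOf σ) l (Nat.zero_le _)
        omega
      · -- l is mid, so l ≠ a-1 (a-1 is an end)
        have hlne : l ≠ a - 1 := by
          intro hcon
          rcases ha2 with h0 | ⟨h1', ha', hE'⟩
          · omega
          · exact he (by rw [hcon]; exact (isEnd_cOf σ (a-1) ha').2 hE')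
        omega
    have hinv' : ∀ v, n - a ≤ v → v < n →
        ∃ l, ∃ hl : l < n, l ≤ a - 1 ∧ (σ ⟨l, hl⟩ : ℕ) = v := by
      intro v hv1 hv2
      rcases ha2 with h0 | ⟨h1', ha', hE'⟩
      · omega
      · have hrec := (IH (a-1) (by omega) ha').2 hE' v (by omega) hv2
        obtain ⟨l, hl, hle, hval⟩ := hrec
        exact ⟨l, hl, hle, hval⟩
    have hlow := sigma_lower σ h123 h132 ⟨i, hi⟩
    simp only [Fin.val_mk] at hlow
    have hused : ∀ v, n - 1 - i ≤ v → v < n → v ≠ n - 1 - a →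
        ∃ l, ∃ hl : l < n, l < i ∧ (σ ⟨l, hl⟩ : ℕ) = v := by
      intro v h1 h2 h3
      by_cases hva : n - a ≤ v
      · obtain ⟨l, hl, hle, hval⟩ := hinv' v hva h2
        exact ⟨l, hl, by omega, hval⟩
      · refine ⟨n - 2 - v, by omega, by omega, ?_⟩
        rw [hf1 (n-2-v) (by omega) (by omega) (by omega)]
        omega
    have hcand : (σ ⟨i, hi⟩ : ℕ) = n - 2 - i ∨ (σ ⟨i, hi⟩ : ℕ) = n - 1 - a := by
      by_contra hcon
      push_neg at hcon
      obtain ⟨l, hl, hli, hval⟩ := hused (σ ⟨i, hi⟩ : ℕ)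
        (by omega) (σ ⟨i, hi⟩).2 hcon.2
      have heq : (⟨l, hl⟩ : Fin n) = ⟨i, hi⟩ := σ.injective (Fin.ext hval)
      have : l = i := by
        have := congrArg Fin.val heq
        simpa using this
      omega
    have hgoal1 : (σ ⟨i, hi⟩ : ℕ) = n - 1 - a := by
      rcases hcand with hc | hc
      · have hv0 : n - 1 - a < n := by omega
        set p := σ.symm ⟨n - 1 - a, hv0⟩ with hp
        have hσp : σ p = ⟨n - 1 - a, hv0⟩ := Equiv.apply_symm_apply σ _
        rcases lt_trichotomy (p : ℕ) i with hpi | hpi | hpi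
        · exfalso
          rcases Nat.lt_or_ge (p : ℕ) a with hpa | hpa
          · have h5 := hf3 p.1 p.2 hpa
            rw [Fin.eta, hσp] at h5
            simp only [Fin.val_mk] at h5
            omega
          · have h5 := hf1 p.1 hpa hpi p.2
            rw [Fin.eta, hσp] at h5
            simp only [Fin.val_mk] at h5
            omega
        · have hpe : p = ⟨i, hi⟩ := Fin.ext hpi
          rw [← hpe, hσp]
        · exfalso
          have h5 := hE p (Fin.lt_def.2 (by simpa using hpi))
          rw [hσp, Fin.lt_def] at h5
          simp only [Fin.val_mk] at h5
          omega
      · exact hc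
    refine ⟨?_, ?_⟩
    · unfold fct
      rw [if_pos hEnd, hgoal1, ha]
    · intro _ v hv1 hv2
      by_cases hva : v = n - 1 - a
      · exact ⟨i, hi, le_refl _, by rw [hgoal1, hva]⟩
      · obtain ⟨l, hl, hli, hval⟩ := hused v hv1 hv2 hva
        exact ⟨l, hl, by omega, hval⟩
  · -- i is not an end
    have hEnd : ¬ isEnd n (cOf σ) i := fun h => hE ((isEnd_cOf σ i hi).1 h)
    refine ⟨?_, fun h => absurd h hE⟩
    unfold fct
    rw [if_neg hEnd]
    have hprev : ∀ l, ∀ hl : l < n, l < i → n - 1 - i ≤ (σ ⟨l, hl⟩ : ℕ) := by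
      intro l hl hli
      rw [(IH l hli hl).1]
      unfold fct
      split_ifs with he
      · have := stR_le 0 (cOf σ) l (Nat.zero_le _)
        omega
      · omega
    have hlow := sigma_lower σ h123 h132 ⟨i, hi⟩
    by_contra hne
    have hge : n - 1 - i ≤ (σ ⟨i, hi⟩ : ℕ) := by
      simp only [Fin.val_mk] at hlow ⊢
      omega
    push_neg at hE
    obtain ⟨j, hij, hj⟩ := hE
    have hjne : σ ⟨i, hi⟩ ≠ σ j := fun hc => (Fin.ne_of_lt hij) (σ.injective hc)
    have hjgt : σ ⟨i, hi⟩ < σ j := lt_of_le_of_ne hj hjne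
    have hTcard : (Finset.univ.filter (fun l : Fin n => n - 1 - i ≤ (σ l : ℕ))).card
        = n - (n - 1 - i) := card_sigma_ge σ (n - 1 - i) (by omega)
    have hsub : insert j (Finset.univ.filter (fun l : Fin n => (l : ℕ) < i + 1))
        ⊆ Finset.univ.filter (fun l : Fin n => n - 1 - i ≤ (σ l : ℕ)) := by
      intro l hlmem
      rcases Finset.mem_insert.1 hlmem with rfl | hlmem
      · refine Finset.mem_filter.2 ⟨Finset.mem_univ _, ?_⟩
        have := Fin.lt_def.1 hjgt
        omega
      · refine Finset.mem_filter.2 ⟨Finset.mem_univ _, ?_⟩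
        have hli := (Finset.mem_filter.1 hlmem).2
        rcases Nat.lt_or_ge (l : ℕ) i with h | h
        · have := hprev l.1 l.2 h
          rwa [Fin.eta] at this
        · have hli2 : (l : ℕ) = i := by omega
          have : l = ⟨i, hi⟩ := Fin.ext hli2
          rw [this]
          exact hge
    have hjnotmem : j ∉ Finset.univ.filter (fun l : Fin n => (l : ℕ) < i + 1) := by
      intro hmem
      have := (Finset.mem_filter.1 hmem).2
      have := Fin.lt_def.1 hij
      simp only [Fin.val_mk] at this
      omega
    have hcard2 : (insert j (Finset.univ.filter (fun l : Fin n => (l : ℕ) < i + 1))).card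
        = i + 2 := by
      rw [Finset.card_insert_of_notMem hjnotmem, card_lt_filter n (i+1) (by omega)]
    have := Finset.card_le_card hsub
    rw [hcard2, hTcard] at this
    omega

lemma pmc_cOf {n : ℕ} (hn : 0 < n) (σ : Equiv.Perm (Fin n)) (h123 : avoids123 σ)
    (h132 : avoids132 σ) : pmc n hn (cOf σ) = σ := by
  apply Equiv.ext
  intro x
  apply Fin.ext
  rw [pmc_apply]
  have := (main_structure σ h123 h132 x.1 x.2).1
  rw [Fin.eta] at this
  exact this.symm


noncomputable def gsums (n a : ℕ) (c : Finset ℕ) : ℕ :=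
  ∑ d ∈ insert n c, hh n (stR a c (d - 1)) d

/-- the arithmetic crossing predicate -/
def Q (n : ℕ) (c : Finset ℕ) (I J : ℕ) : Prop :=
  ¬ isEnd n c I ∧ isEnd n c J ∧ stR 0 c J ≤ I ∧ I < J ∧
    (I + J + 3 ≤ n ∨ n ≤ I + stR 0 c J + 1)

lemma isCrossing_pmc (n : ℕ) (hn : 0 < n) (c : Finset ℕ) (i j : Fin n) :
    isCrossing (pmc n hn c) i j ↔ Q n c i.1 j.1 := by
  have hio : ∀ x y : Fin n, (pmc n hn c x < pmc n hn c y) ↔ fct n c x.1 < fct n c y.1 := by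
    intro x y
    rw [Fin.lt_def, pmc_apply, pmc_apply]
  constructor
  · rintro (⟨hij, h2, h3⟩ | ⟨h1, h2, hij⟩)
    · have hij' := Fin.lt_def.1 hij
      obtain ⟨hmid, hend, hst⟩ := (fct_lt_iff n c i.1 j.1 hij' j.2).1 ((hio i j).1 h3)
      have h2' : j.1 < fct n c i.1 := by
        have := Fin.lt_def.1 h2
        rwa [pmc_apply] at this
      have hfi : fct n c i.1 = n - 2 - i.1 := by unfold fct; rw [if_neg hmid]
      have hile := mid_le n c i.1 i.2 hmid
      exact ⟨hmid, hend, hst, hij', Or.inl (by omega)⟩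
    · have hij' := Fin.lt_def.1 hij
      obtain ⟨hmid, hend, hst⟩ := (fct_lt_iff n c i.1 j.1 hij' j.2).1 ((hio i j).1 h1)
      have h2' : fct n c j.1 ≤ i.1 := by
        have := Fin.le_def.1 h2
        rwa [pmc_apply] at this
      have hfj : fct n c j.1 = n - 1 - stR 0 c j.1 := by unfold fct; rw [if_pos hend]
      have hsle : stR 0 c j.1 ≤ j.1 := stR_le 0 c j.1 (Nat.zero_le _)
      have := j.2
      exact ⟨hmid, hend, hst, hij', Or.inr (by omega)⟩
  · rintro ⟨hmid, hend, hst, hij, hD⟩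
    have hlt : pmc n hn c i < pmc n hn c j :=
      (hio i j).2 ((fct_lt_iff n c i.1 j.1 hij j.2).2 ⟨hmid, hend, hst⟩)
    have hfi : fct n c i.1 = n - 2 - i.1 := by unfold fct; rw [if_neg hmid]
    have hfj : fct n c j.1 = n - 1 - stR 0 c j.1 := by unfold fct; rw [if_pos hend]
    have hile := mid_le n c i.1 i.2 hmid
    have hsle : stR 0 c j.1 ≤ j.1 := stR_le 0 c j.1 (Nat.zero_le _)
    have hjn := j.2
    rcases hD with hD | hD
    · left
      refine ⟨Fin.lt_def.2 hij, ?_, hlt⟩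
      rw [Fin.lt_def, pmc_apply, hfi]
      omega
    · right
      refine ⟨hlt, ?_, Fin.lt_def.2 hij⟩
      rw [Fin.le_def, pmc_apply, hfj]
      omega

lemma cnt_end (n : ℕ) (c : Finset ℕ) (hc : c ⊆ Finset.Icc 1 (n-1)) (J : ℕ) (hJ : J < n)
    (hend : isEnd n c J) :
    ((Finset.range n).filter (fun I => Q n c I J)).card = hh n (stR 0 c J) (J + 1) := by
  have hA : stR 0 c J ≤ J := stR_le 0 c J (Nat.zero_le _)
  have hQ : ((Finset.range n).filter (fun I => Q n c I J))
      = (Finset.Ico (stR 0 c J) J).filter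
        (fun I => I + J + 3 ≤ n ∨ n ≤ I + stR 0 c J + 1) := by
    ext I
    simp only [Finset.mem_filter, Finset.mem_range, Finset.mem_Ico]
    constructor
    · rintro ⟨hIn, hQ⟩
      exact ⟨⟨hQ.2.2.1, hQ.2.2.2.1⟩, hQ.2.2.2.2⟩
    · rintro ⟨⟨h1, h2⟩, hD⟩
      refine ⟨by omega, ?_, hend, h1, h2, hD⟩
      -- I is not an end
      intro hEl
      rcases hEl with h | h
      · omega
      · have := stR_le_sR 0 c J (I+1) h (by omega)
        omega
  rw [hQ, Finset.filter_or]
  rw [Finset.card_union_of_disjoint]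
  · have e1 : (Finset.Ico (stR 0 c J) J).filter (fun I => I + J + 3 ≤ n)
        = Finset.Ico (stR 0 c J) (min J (n - J - 2)) := by
      ext I
      simp only [Finset.mem_filter, Finset.mem_Ico]
      omega
    have e2 : (Finset.Ico (stR 0 c J) J).filter (fun I => n ≤ I + stR 0 c J + 1)
        = Finset.Ico (max (stR 0 c J) (n - 1 - stR 0 c J)) J := by
      ext I
      simp only [Finset.mem_filter, Finset.mem_Ico]
      omega
    rw [e1, e2, Nat.card_Ico, Nat.card_Ico]
    unfold hh
    split_ifs with hcd
    · omega
    · omega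
  · rw [Finset.disjoint_left]
    intro I hI hI2
    have h1 := (Finset.mem_filter.1 hI).2
    have h2 := (Finset.mem_filter.1 hI2).2
    have h3 := (Finset.mem_Ico.1 (Finset.mem_filter.1 hI).1)
    omega

theorem crs_pmc (n : ℕ) (hn : 0 < n) (c : Finset ℕ) (hc : c ⊆ Finset.Icc 1 (n-1)) :
    crs (pmc n hn c) = gsums n 0 c := by
  unfold crs
  -- pass to ℕ pairs
  have h1 : (Finset.univ.filter
        (fun p : Fin n × Fin n => isCrossing (pmc n hn c) p.1 p.2)).card
      = (((Finset.range n) ×ˢ (Finset.range n)).filter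
          (fun q : ℕ × ℕ => Q n c q.1 q.2)).card := by
    refine Finset.card_bij' (fun p _ => ((p.1.1 : ℕ), (p.2.1 : ℕ)))
      (fun q hq => (⟨q.1, by
          have := (Finset.mem_product.1 (Finset.mem_filter.1 hq).1).1
          exact Finset.mem_range.1 this⟩,
        ⟨q.2, by
          have := (Finset.mem_product.1 (Finset.mem_filter.1 hq).1).2
          exact Finset.mem_range.1 this⟩)) ?_ ?_ ?_ ?_
    · intro p hp
      refine Finset.mem_filter.2 ⟨?_, ?_⟩
      · exact Finset.mem_product.2 ⟨Finset.mem_range.2 p.1.2, Finset.mem_range.2 p.2.2⟩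
      · exact (isCrossing_pmc n hn c p.1 p.2).1 (Finset.mem_filter.1 hp).2
    · intro q hq
      refine Finset.mem_filter.2 ⟨Finset.mem_univ _, ?_⟩
      exact (isCrossing_pmc n hn c _ _).2 (Finset.mem_filter.1 hq).2
    · intro p hp
      rfl
    · intro q hq
      rfl
  rw [h1]
  rw [Finset.card_eq_sum_card_fiberwise
    (f := fun q : ℕ × ℕ => q.2) (t := Finset.range n)
    (fun q hq => (Finset.mem_product.1 (Finset.mem_filter.1 hq).1).2)]
  -- fiber = I-filter
  have h2 : ∀ J ∈ Finset.range n,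
      ((((Finset.range n) ×ˢ (Finset.range n)).filter (fun q : ℕ × ℕ => Q n c q.1 q.2)).filter
        (fun q => q.2 = J)).card
      = ((Finset.range n).filter (fun I => Q n c I J)).card := by
    intro J hJ
    refine Finset.card_bij' (fun q _ => q.1) (fun I hI => (I, J)) ?_ ?_ ?_ ?_
    · intro q hq
      obtain ⟨hq1, hq2⟩ := Finset.mem_filter.1 hq
      obtain ⟨hq3, hq4⟩ := Finset.mem_filter.1 hq1
      refine Finset.mem_filter.2 ⟨(Finset.mem_product.1 hq3).1, ?_⟩
      rwa [hq2] at hq4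
    · intro I hI
      obtain ⟨hI1, hI2⟩ := Finset.mem_filter.1 hI
      exact Finset.mem_filter.2 ⟨Finset.mem_filter.2
        ⟨Finset.mem_product.2 ⟨hI1, hJ⟩, hI2⟩, rfl⟩
    · intro q hq
      have h := (Finset.mem_filter.1 hq).2
      rw [← h]
    · intro I hI
      rfl
  rw [Finset.sum_congr rfl h2]
  -- restrict to ends
  rw [← Finset.sum_subset (Finset.filter_subset (fun J => isEnd n c J) (Finset.range n))]
  · -- reindex ends to insert n c
    unfold gsums
    refine Finset.sum_nbij' (i := fun J => J + 1) (j := fun d => d - 1) ?_ ?_ ?_ ?_ ?_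
    · intro J hJ
      obtain ⟨hJ1, hJ2⟩ := Finset.mem_filter.1 hJ
      rcases hJ2 with h | h
      · rw [h]; exact Finset.mem_insert_self _ _
      · exact Finset.mem_insert_of_mem h
    · intro d hd
      rcases Finset.mem_insert.1 hd with rfl | hd
      · refine Finset.mem_filter.2 ⟨Finset.mem_range.2 (by omega), Or.inl (by omega)⟩
      · have := Finset.mem_Icc.1 (hc hd)
        refine Finset.mem_filter.2 ⟨Finset.mem_range.2 (by omega), Or.inr ?_⟩
        have h2 : d - 1 + 1 = d := by omega
        rw [h2]
        exact hd
    · intro J hJ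
      omega
    · intro d hd
      rcases Finset.mem_insert.1 hd with rfl | hd
      · omega
      · have := Finset.mem_Icc.1 (hc hd)
        omega
    · intro J hJ
      obtain ⟨hJ1, hJ2⟩ := Finset.mem_filter.1 hJ
      have h3 : J + 1 - 1 = J := by omega
      rw [h3]
      exact cnt_end n c hc J (Finset.mem_range.1 hJ1) hJ2
  · -- zero off ends
    intro J hJ hJe
    have hJe' : ¬ isEnd n c J := by
      intro h
      exact hJe (Finset.mem_filter.2 ⟨hJ, h⟩)
    rw [Finset.card_eq_zero]
    apply Finset.filter_eq_empty_iff.2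
    intro I hI
    intro hQ
    exact hJe' hQ.2.1

/-! ### summation over cut sets -/

lemma stR_empty (a i : ℕ) : stR a ∅ i = a := by
  rcases stR_mem a ∅ i with h | h
  · exact h
  · exact absurd h (Finset.notMem_empty _)

lemma stR_eq_a (a : ℕ) (c : Finset ℕ) (i : ℕ) (hai : a ≤ i)
    (hc : ∀ x ∈ c, i < x) : stR a c i = a := by
  rcases stR_mem a c i with h | h
  · exact h
  · have h1 := stR_le a c i hai
    have := hc _ h
    omega

lemma stR_shift (a b : ℕ) (c' : Finset ℕ) (i : ℕ) (hab : a ≤ b) (hbi : b ≤ i)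
    (hc' : ∀ x ∈ c', b < x) :
    stR a (insert b c') i = stR b c' i := by
  have hle : stR a (insert b c') i ≤ i := stR_le a (insert b c') i (le_trans hab hbi)
  have hle2 : stR b c' i ≤ i := stR_le b c' i hbi
  apply le_antisymm
  · rcases stR_mem a (insert b c') i with h | h
    · rw [h]; exact le_trans hab (stR_ge b c' i)
    · rcases Finset.mem_insert.1 h with h | h
      · rw [h]; exact stR_ge b c' i
      · exact stR_le_sR b c' i _ h hle
  · rcases stR_mem b c' i with h | h
    · rw [h]
      exact stR_le_sR a (insert b c') i b (Finset.mem_insert_self _ _) hbi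
    · exact stR_le_sR a (insert b c') i _ (Finset.mem_insert_of_mem h) hle2

lemma gsums_empty (n a : ℕ) : gsums n a ∅ = hh n a n := by
  unfold gsums
  rw [show insert n (∅ : Finset ℕ) = {n} from rfl, Finset.sum_singleton, stR_empty]

lemma gsums_insert (n a b : ℕ) (c' : Finset ℕ) (hab : a < b) (hbn : b ≤ n - 1) (hn : 1 ≤ n)
    (hc' : ∀ x ∈ c', b < x ∧ x ≤ n - 1) :
    gsums n a (insert b c') = hh n a b + gsums n b c' := by
  unfold gsums
  have hbn' : b ≠ n := by omega
  have hbc' : b ∉ c' := fun h => by have := (hc' b h).1; omega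
  have hcomm : insert n (insert b c') = insert b (insert n c') := Finset.insert_comm _ _ _
  rw [hcomm, Finset.sum_insert (by
    simp only [Finset.mem_insert]
    push_neg
    exact ⟨hbn', hbc'⟩)]
  have hterm : stR a (insert b c') (b - 1) = a := by
    apply stR_eq_a
    · omega
    · intro x hx
      rcases Finset.mem_insert.1 hx with rfl | hx
      · omega
      · have := (hc' x hx).1
        omega
  rw [hterm]
  congr 1
  apply Finset.sum_congr rfl
  intro d hd
  have hdb : b < d := by
    rcases Finset.mem_insert.1 hd with rfl | hd
    · omega
    · exact (hc' d hd).1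
  rw [stR_shift a b c' (d-1) (by omega) (by omega) (fun x hx => (hc' x hx).1)]

lemma pdecomp (F : Finset ℕ → Polynomial ℤ) :
    ∀ (N u v : ℕ), v + 1 - u ≤ N →
    ∑ c ∈ (Finset.Icc u v).powerset, F c
      = F ∅ + ∑ b ∈ Finset.Icc u v, ∑ c ∈ (Finset.Icc (b+1) v).powerset, F (insert b c) := by
  intro N
  induction N with
  | zero =>
    intro u v huv
    have he : Finset.Icc u v = ∅ := by
      apply Finset.Icc_eq_empty
      omega
    rw [he]
    simp
  | succ N ih =>
    intro u v huv
    rcases Nat.lt_or_ge v u with h | h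
    · have he : Finset.Icc u v = ∅ := by
        apply Finset.Icc_eq_empty
        omega
      rw [he]
      simp
    · have hins : Finset.Icc u v = insert u (Finset.Icc (u+1) v) := by
        ext x
        simp only [Finset.mem_Icc, Finset.mem_insert]
        omega
      have hnotmem : u ∉ Finset.Icc (u+1) v := by
        simp only [Finset.mem_Icc]
        omega
      rw [hins, Finset.sum_powerset_insert hnotmem, ih (u+1) v (by omega),
        Finset.sum_insert hnotmem]
      ring

theorem SUMP (n : ℕ) : ∀ N a, a < n → n - 1 - a ≤ N →
    (∑ c ∈ (Finset.Icc (a+1) (n-1)).powerset, (X : Polynomial ℤ) ^ gsums n a c) = PP n a := by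
  intro N
  induction N with
  | zero =>
    intro a ha hN
    have he : Finset.Icc (a+1) (n-1) = ∅ := by
      apply Finset.Icc_eq_empty
      omega
    rw [PP_eq, he]
    simp [gsums_empty]
  | succ N ih =>
    intro a ha hN
    rw [pdecomp _ (n - 1 - a) (a+1) (n-1) (by omega)]
    have hstep : ∀ b ∈ Finset.Icc (a+1) (n-1),
        (∑ c ∈ (Finset.Icc (b+1) (n-1)).powerset, (X:Polynomial ℤ) ^ gsums n a (insert b c))
          = X ^ hh n a b * PP n b := by
      intro b hb
      have hb' := Finset.mem_Icc.1 hb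
      rw [← ih b (by omega) (by omega), Finset.mul_sum]
      apply Finset.sum_congr rfl
      intro c hc
      have hc' := Finset.mem_powerset.1 hc
      rw [gsums_insert n a b c (by omega) (by omega) (by omega)
        (fun x hx => by have := Finset.mem_Icc.1 (hc' hx); omega)]
      rw [pow_add]
    rw [Finset.sum_congr rfl hstep, gsums_empty, PP_eq]

theorem F_eq_sum (n : ℕ) (hn : 1 ≤ n) :
    F123132 n = ∑ c ∈ (Finset.Icc 1 (n-1)).powerset, (X : Polynomial ℤ) ^ gsums n 0 c := by
  unfold F123132
  refine (Finset.sum_nbij' (i := fun c => pmc n hn c) (j := fun σ => cOf σ)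
    ?_ ?_ ?_ ?_ ?_).symm
  · intro c hc
    exact Finset.mem_filter.2 ⟨Finset.mem_univ _, pmc_avoids n hn c⟩
  · intro σ hσ
    exact Finset.mem_powerset.2 (cOf_subset σ)
  · intro c hc
    exact cOf_pmc n hn c (Finset.mem_powerset.1 hc)
  · intro σ hσ
    have h := (Finset.mem_filter.1 hσ).2
    exact pmc_cOf hn σ h.1 h.2
  · intro c hc
    rw [crs_pmc n hn c (Finset.mem_powerset.1 hc)]

theorem key (n : ℕ) (hn : 1 ≤ n) :
    X * F123132 n = (1 + X)^(n-1) - 1 + X := by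
  rw [F_eq_sum n hn, SUMP n (n-1) 0 (by omega) (by omega), Pfinal n hn]


theorem recurrence_123_132 :
    (∀ n : ℕ, 2 ≤ n →
        F123132 n = (1 + Polynomial.X) * F123132 (n - 1) + 1 - Polynomial.X) ∧
      ∀ n : ℕ, 1 ≤ n →
        Polynomial.X * F123132 n = (1 + Polynomial.X) ^ (n - 1) - 1 + Polynomial.X := by
  constructor
  · intro n hn
    have h1 := key n (by omega)
    have h2 := key (n-1) (by omega)
    have hX : (X : Polynomial ℤ) ≠ 0 := Polynomial.X_ne_zero
    apply mul_left_cancel₀ hX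
    rw [h1]
    have e1 : n - 1 - 1 = n - 2 := by omega
    rw [e1] at h2
    have e3 : ((1 : Polynomial ℤ) + X)^(n-1) = (1+X)^(n-2) * (1+X) := by
      rw [← pow_succ]
      congr 1
      omega
    rw [e3]
    linear_combination (-(1 + (X:Polynomial ℤ))) * h2
  · exact key


end
end

section
/- For n ≥ 2 and every k ≥ 0, the number of permutations σ of [n] that avoid both 123 and 132, satisfy σ(n−1)=1, and have exactly k crossings equals the binomial coefficient C(n−2, k). -/
open Finset Polynomial Equiv

attribute [local instance] Classical.propDecidable

/-!
Avoiding both `123` and `132` means that every entry has at most one larger entry to its right.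
An entry `σ i` that is not a right-to-left maximum therefore has all smaller values to its right,
which forces `σ i = n - 2 - i`; on the right-to-left maxima `σ` decreases, so it is determined
by its set `Z ∪ {n - 1}` of right-to-left maxima, and `σ (n - 2) = 0` says exactly that
`Z ⊆ {0, …, n - 3}`. Each such `Z` occurs.

For such `σ`, a crossing `(i, j)` has `j` the first right-to-left maximum after `i`, and `i` is
the left end of a crossing iff `i ∉ Z ∪ {n - 1}` and some `z ∈ Z` comes after `i` in the order
`n - 2, 0, n - 3, 1, …`. Replacing `Z` by the set `Y ⊆ {1, …, n - 2}` of its ranks in that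
order, the crossing number becomes the number of gaps of `Y` below `max Y`, and the involution
`Y ↦ [1, max Y] \ (Y \ {max Y})` turns this statistic into `#Y`.
-/

def Equiv.Perm.IsRLMax {α : Type*} [LinearOrder α] (σ : Perm α) (i : α) : Prop :=
  ∀ j, i < j → σ j < σ i

theorem Equiv.Perm.eq_of_isRLMax {α : Type*} [LinearOrder α] [WellFoundedLT α]
    {σ τ : Perm α} (S : Set α) (hσ : ∀ i ∈ S, σ.IsRLMax i) (hτ : ∀ i ∈ S, τ.IsRLMax i)
    (h : ∀ i ∉ S, σ i = τ i) : σ = τ := by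
  have key : ∀ {σ τ : Perm α} (i : α), σ.IsRLMax i → (∀ j < i, σ j = τ j) → ¬ σ i < τ i := by
    intro σ τ i hσi hlt hστ
    obtain ⟨j, hσj⟩ : ∃ j, σ j = τ i := ⟨σ.symm (τ i), σ.apply_symm_apply _⟩
    have hji : j < i := by
      by_contra! hij
      rcases hij.lt_or_eq with hij | rfl
      · exact (hσi j hij).not_gt (hσj ▸ hστ)
      · exact hστ.ne hσj
    exact hji.ne (τ.injective ((hlt j hji).symm.trans hσj))
  ext1 i
  induction i using WellFoundedLT.induction with
  | _ i ih =>
    by_cases hi : i ∈ S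
    · exact le_antisymm (not_lt.1 (key i (hτ i hi) fun j hj => (ih j hj).symm))
        (not_lt.1 (key i (hσ i hi) ih))
    · exact h i hi

noncomputable def rlMaxima {n : ℕ} (σ : Perm (Fin n)) : Finset (Fin n) :=
  univ.filter σ.IsRLMax

theorem isRLMax_last {n : ℕ} (σ : Perm (Fin (n + 1))) : σ.IsRLMax (Fin.last n) :=
  fun j hj => absurd hj (Fin.le_last j).not_gt

section Avoiders

variable {n : ℕ} {σ : Perm (Fin n)}

theorem avoids123_and_avoids132_iff :
    avoids123 σ ∧ avoids132 σ ↔ ¬ ∃ i j k, i < j ∧ j < k ∧ σ i < σ j ∧ σ i < σ k := by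
  constructor
  · rintro ⟨h123, h132⟩ ⟨i, j, k, hij, hjk, hj, hk⟩
    rcases lt_trichotomy (σ j) (σ k) with h | h | h
    · exact h123 ⟨i, j, k, hij, hjk, hj, h⟩
    · exact hjk.ne (σ.injective h)
    · exact h132 ⟨i, j, k, hij, hjk, hk, h⟩
  · intro h
    exact ⟨fun ⟨i, j, k, hij, hjk, hj, hk⟩ => h ⟨i, j, k, hij, hjk, hj, hj.trans hk⟩,
      fun ⟨i, j, k, hij, hjk, hk, hj⟩ => h ⟨i, j, k, hij, hjk, hk.trans hj, hk⟩⟩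

theorem eq_of_lt_of_apply_lt (h : avoids123 σ ∧ avoids132 σ) {i j k : Fin n}
    (hij : i < j) (hik : i < k) (hj : σ i < σ j) (hk : σ i < σ k) : j = k := by
  rw [avoids123_and_avoids132_iff] at h
  by_contra hjk
  rcases lt_or_gt_of_ne hjk with hjk | hkj
  · exact h ⟨i, j, k, hij, hjk, hj, hk⟩
  · exact h ⟨i, k, j, hik, hkj, hk, hj⟩

theorem card_filter_apply_lt (v : Fin n) : #(univ.filter fun j => σ j < v) = v := by
  rw [← Fin.card_Iio v]
  exact card_nbij' σ σ.symm (by intro j; simp) (by intro v; simp)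
    (by intro j _; simp) (by intro v _; simp)

/-- Every value smaller than `σ i` sits right of `i` (else `123`), and so does exactly one
larger value. -/
theorem apply_add_add_two_of_not_isRLMax (h : avoids123 σ ∧ avoids132 σ) {i : Fin n}
    (hi : ¬ σ.IsRLMax i) : (σ i : ℕ) + i + 2 = n := by
  obtain ⟨k, hik, hk⟩ : ∃ k, i < k ∧ σ i ≤ σ k := by simpa [Equiv.Perm.IsRLMax] using hi
  replace hk : σ i < σ k := hk.lt_of_ne fun h => hik.ne (σ.injective h)
  have hsmaller : (univ.filter fun j => σ j < σ i) = (Ioi i).erase k := by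
    ext j
    simp only [mem_filter, mem_univ, true_and, mem_erase, mem_Ioi]
    constructor
    · intro hj
      refine ⟨fun hjk => (hj.trans hk).ne (by rw [hjk]), ?_⟩
      by_contra! hji
      rcases hji.lt_or_eq with hji | rfl
      · exact (avoids123_and_avoids132_iff.1 h) ⟨j, i, k, hji, hik, hj, hj.trans hk⟩
      · exact hj.false
    · rintro ⟨hjk, hij⟩
      by_contra! hj
      rcases hj.lt_or_eq with hj | hj
      · exact hjk (eq_of_lt_of_apply_lt h hij hik hj hk)
      · exact hij.ne (σ.injective hj)
  have hcard := congrArg Finset.card hsmaller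
  rw [card_filter_apply_lt, card_erase_of_mem (mem_Ioi.2 hik), Fin.card_Ioi] at hcard
  have : (i : ℕ) < k := hik
  omega

theorem lt_and_apply_lt_of_isCrossing {i j : Fin n} (h : isCrossing σ i j) :
    i < j ∧ σ i < σ j := by
  rcases h with ⟨hij, -, hσ⟩ | ⟨hσ, -, hij⟩ <;> exact ⟨hij, hσ⟩

theorem crs_eq_card_filter_exists_isCrossing (h : avoids123 σ ∧ avoids132 σ) :
    crs σ = #(univ.filter fun i => ∃ j, isCrossing σ i j) := by
  refine card_bij (fun p _ => p.1) (fun p hp => ?_) (fun p hp q hq hpq => ?_) (fun i hi => ?_)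
  · simp only [mem_filter, mem_univ, true_and] at hp ⊢
    exact ⟨p.2, hp⟩
  · simp only [mem_filter, mem_univ, true_and] at hp hq
    obtain ⟨hp₁, hp₂⟩ := lt_and_apply_lt_of_isCrossing hp
    obtain ⟨hq₁, hq₂⟩ := lt_and_apply_lt_of_isCrossing hq
    rw [← hpq] at hq₁ hq₂
    exact Prod.ext hpq (eq_of_lt_of_apply_lt h hp₁ hq₁ hp₂ hq₂)
  · simp only [mem_filter, mem_univ, true_and] at hi
    obtain ⟨j, hj⟩ := hi
    exact ⟨(i, j), by simpa using hj, rfl⟩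

end Avoiders

section SuccMaxBelow

variable {n : ℕ} (Z : Finset (Fin n))

def succMaxBelow (i : Fin n) : ℕ :=
  (Z.filter (· < i)).sup fun z => (z : ℕ) + 1

theorem succMaxBelow_le (i : Fin n) : succMaxBelow Z i ≤ i :=
  Finset.sup_le fun _ hz => (mem_filter.1 hz).2

theorem succMaxBelow_eq_zero_or (i : Fin n) :
    succMaxBelow Z i = 0 ∨ ∃ z ∈ Z, z < i ∧ succMaxBelow Z i = z + 1 := by
  rcases (Z.filter (· < i)).eq_empty_or_nonempty with h | h
  · left; simp [succMaxBelow, h]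
  · obtain ⟨z, hz, hsup⟩ := exists_mem_eq_sup _ h fun z : Fin n => (z : ℕ) + 1
    exact Or.inr ⟨z, (mem_filter.1 hz).1, (mem_filter.1 hz).2, hsup⟩

variable {Z}

theorem lt_succMaxBelow {i z : Fin n} (hz : z ∈ Z) (hzi : z < i) : (z : ℕ) < succMaxBelow Z i :=
  Finset.le_sup (f := fun z : Fin n => (z : ℕ) + 1) (mem_filter.2 ⟨hz, hzi⟩)

theorem succMaxBelow_eq_of_le {i j : Fin n} (hi : i ∉ Z) (hij : i ≤ j)
    (hj : ∀ z ∈ Z, i < z → j ≤ z) : succMaxBelow Z j = succMaxBelow Z i := by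
  unfold succMaxBelow
  congr 1
  refine filter_congr fun z hz => ⟨fun hzj => ?_, fun hzi => hzi.trans_le hij⟩
  by_contra! hiz
  rcases hiz.lt_or_eq with hiz | rfl
  · exact (hj z hz hiz).not_gt hzj
  · exact hi hz

end SuccMaxBelow

section PermOfRLMax

variable {w : ℕ} (Z : Finset (Fin (w + 2)))

/-- Off `Z ∪ {last}` the antidiagonal `i ↦ w - i`; on it, each element takes the value the
antidiagonal gives its predecessor in `Z`, and the first one takes `w + 1`. -/
def permOfRLMaxVal (i : Fin (w + 2)) : ℕ :=
  if i ∈ Z ∨ i = Fin.last (w + 1) then w + 1 - succMaxBelow Z i else w - i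

theorem permOfRLMaxVal_injective : Function.Injective (permOfRLMaxVal Z) := by
  have hlt : ∀ {a b : Fin (w + 2)}, a ∈ Z ∨ a = Fin.last (w + 1) → a < b →
      succMaxBelow Z a < succMaxBelow Z b := by
    intro a b ha hab
    have ha : a ∈ Z := ha.resolve_right (hab.trans_le (Fin.le_last b)).ne
    exact (succMaxBelow_le Z a).trans_lt (lt_succMaxBelow ha hab)
  have hcross : ∀ {a b : Fin (w + 2)}, ¬ (b ∈ Z ∨ b = Fin.last (w + 1)) →
      w + 1 - succMaxBelow Z a ≠ w - b := by
    intro a b hb hab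
    obtain ⟨hbZ, hbL⟩ := not_or.1 hb
    have := Fin.val_lt_last hbL
    have := succMaxBelow_le Z a
    rcases succMaxBelow_eq_zero_or Z a with h | ⟨z, hz, -, h⟩
    · omega
    · exact hbZ (Fin.ext (show (z : ℕ) = b by omega) ▸ hz)
  intro a b hab
  unfold permOfRLMaxVal at hab
  split_ifs at hab with ha hb hb
  · have := succMaxBelow_le Z a
    have := succMaxBelow_le Z b
    have := b.isLt
    rcases lt_trichotomy a b with h | h | h
    · have := hlt ha h; omega
    · exact h
    · have := hlt hb h; omega
  · exact absurd hab (hcross hb)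
  · exact absurd hab.symm (hcross ha)
  · have := Fin.val_lt_last (not_or.1 ha).2
    have := Fin.val_lt_last (not_or.1 hb).2
    exact Fin.ext (by omega)

noncomputable def permOfRLMax : Perm (Fin (w + 2)) :=
  Equiv.ofBijective (fun i => ⟨permOfRLMaxVal Z i, by unfold permOfRLMaxVal; split_ifs <;> omega⟩)
    (Finite.injective_iff_bijective.1 fun _ _ h =>
      permOfRLMaxVal_injective Z (congrArg Fin.val h))

variable {Z} {i j z : Fin (w + 2)}

theorem permOfRLMax_apply_of_mem (hi : i ∈ Z ∨ i = Fin.last (w + 1)) :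
    (permOfRLMax Z i : ℕ) = w + 1 - succMaxBelow Z i := by
  simp [permOfRLMax, permOfRLMaxVal, hi]

theorem permOfRLMax_apply_of_notMem (hi : ¬ (i ∈ Z ∨ i = Fin.last (w + 1))) :
    (permOfRLMax Z i : ℕ) = w - i := by
  simp [permOfRLMax, permOfRLMaxVal, hi]

theorem permOfRLMax_add_of_notMem (hi : ¬ (i ∈ Z ∨ i = Fin.last (w + 1))) :
    (permOfRLMax Z i : ℕ) + i = w := by
  have := Fin.val_lt_last (not_or.1 hi).2
  rw [permOfRLMax_apply_of_notMem hi]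
  omega

theorem lt_permOfRLMax_add_of_mem (hi : i ∈ Z ∨ i = Fin.last (w + 1)) :
    w < (permOfRLMax Z i : ℕ) + i := by
  have := succMaxBelow_le Z i
  have := i.isLt
  rw [permOfRLMax_apply_of_mem hi]
  omega

theorem le_permOfRLMax_add (i : Fin (w + 2)) : w ≤ (permOfRLMax Z i : ℕ) + i := by
  by_cases hi : i ∈ Z ∨ i = Fin.last (w + 1)
  · exact (lt_permOfRLMax_add_of_mem hi).le
  · exact (permOfRLMax_add_of_notMem hi).ge

theorem permOfRLMax_add_le (hz : z ∈ Z) (hzj : z < j) : (permOfRLMax Z j : ℕ) + z ≤ w := by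
  by_cases hj : j ∈ Z ∨ j = Fin.last (w + 1)
  · have := lt_succMaxBelow hz hzj
    rw [permOfRLMax_apply_of_mem hj]
    omega
  · have := permOfRLMax_add_of_notMem hj
    have : (z : ℕ) < j := hzj
    omega

theorem isRLMax_permOfRLMax (hi : i ∈ Z ∨ i = Fin.last (w + 1)) :
    (permOfRLMax Z).IsRLMax i := by
  intro j hij
  have hiZ : i ∈ Z := hi.resolve_right (hij.trans_le (Fin.le_last j)).ne
  have := permOfRLMax_add_le hiZ hij
  have := lt_permOfRLMax_add_of_mem hi
  rw [Fin.lt_def]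
  omega

theorem mem_and_le_of_permOfRLMax_lt (hij : i < j) (h : permOfRLMax Z i < permOfRLMax Z j) :
    (j ∈ Z ∨ j = Fin.last (w + 1)) ∧ ∀ z ∈ Z, i < z → j ≤ z := by
  rw [Fin.lt_def] at h hij
  have := le_permOfRLMax_add (Z := Z) i
  refine ⟨?_, fun z hz hiz => ?_⟩
  · by_contra hj
    have := permOfRLMax_add_of_notMem hj
    omega
  · by_contra! hzj
    have := permOfRLMax_add_le hz hzj
    have : (i : ℕ) < z := hiz
    omega

theorem avoids123_and_avoids132_permOfRLMax :
    avoids123 (permOfRLMax Z) ∧ avoids132 (permOfRLMax Z) := by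
  rw [avoids123_and_avoids132_iff]
  rintro ⟨i, j, k, hij, hjk, hj, hk⟩
  obtain ⟨hjR, -⟩ := mem_and_le_of_permOfRLMax_lt hij hj
  have hjZ : j ∈ Z := hjR.resolve_right (hjk.trans_le (Fin.le_last k)).ne
  exact ((mem_and_le_of_permOfRLMax_lt (hij.trans hjk) hk).2 j hjZ hij).not_gt hjk

theorem exists_next_mem_or_eq_last (hi : i ≠ Fin.last (w + 1)) :
    ∃ j, i < j ∧ (j ∈ Z ∨ j = Fin.last (w + 1)) ∧ ∀ z ∈ Z, i < z → j ≤ z := by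
  set s := univ.filter fun j => i < j ∧ (j ∈ Z ∨ j = Fin.last (w + 1))
  have hs : s.Nonempty := ⟨Fin.last _, by simpa [s] using lt_of_le_of_ne (Fin.le_last i) hi⟩
  obtain ⟨hij, hj⟩ := (mem_filter.1 (s.min'_mem hs)).2
  exact ⟨s.min' hs, hij, hj, fun z hz hiz => s.min'_le z (by simp [s, hiz, hz])⟩

theorem exists_permOfRLMax_eq (hi : ¬ (i ∈ Z ∨ i = Fin.last (w + 1))) :
    ∃ j, i < j ∧ (∀ z ∈ Z, i < z → j ≤ z) ∧
      (permOfRLMax Z j : ℕ) = w + 1 - succMaxBelow Z i := by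
  obtain ⟨hiZ, hiL⟩ := not_or.1 hi
  obtain ⟨j, hij, hjR, hjmin⟩ := exists_next_mem_or_eq_last (Z := Z) hiL
  refine ⟨j, hij, hjmin, ?_⟩
  rw [permOfRLMax_apply_of_mem hjR, succMaxBelow_eq_of_le hiZ hij.le hjmin]

theorem isRLMax_permOfRLMax_iff :
    (permOfRLMax Z).IsRLMax i ↔ i ∈ Z ∨ i = Fin.last (w + 1) := by
  refine ⟨fun h => ?_, isRLMax_permOfRLMax⟩
  by_contra hi
  obtain ⟨j, hij, -, hj⟩ := exists_permOfRLMax_eq hi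
  have hlt := Fin.lt_def.1 (h j hij)
  have := permOfRLMax_apply_of_notMem hi
  have := succMaxBelow_le Z i
  omega

theorem rlMaxima_permOfRLMax_erase_last (hZ : ∀ z ∈ Z, (z : ℕ) < w) :
    (rlMaxima (permOfRLMax Z)).erase (Fin.last (w + 1)) = Z := by
  ext i
  by_cases hi : i = Fin.last (w + 1)
  · subst hi
    simpa using fun h => (hZ _ h).not_ge (by simp)
  · simp [rlMaxima, isRLMax_permOfRLMax_iff, hi]

end PermOfRLMax

section Zigzag

/-- The position of `i` in the listing `w, 0, w - 1, 1, w - 2, 2, …` of `{0, …, w}`. -/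
def zigzag (w i : ℕ) : ℕ := if 2 * i < w then 2 * i + 1 else 2 * (w - i)

def unzigzag (w r : ℕ) : ℕ := if r % 2 = 1 then r / 2 else w - r / 2

variable {w i z r : ℕ}

theorem zigzag_lt_zigzag_iff (hi : i ≤ w) (hz : z ≤ w) :
    zigzag w i < zigzag w z ↔ (i < z ∧ i + z < w) ∨ (z < i ∧ w ≤ i + z) := by
  unfold zigzag; split_ifs <;> omega

theorem eq_of_zigzag_eq (hi : i ≤ w) (hz : z ≤ w) (h : zigzag w i = zigzag w z) : i = z := by
  unfold zigzag at h; split_ifs at h <;> omega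

theorem zigzag_mem_Icc (hi : i < w) : zigzag w i ∈ Icc 1 w := by
  rw [mem_Icc]; unfold zigzag; split_ifs <;> omega

theorem unzigzag_le (hr : r ≤ w) : unzigzag w r ≤ w := by
  unfold unzigzag; split_ifs <;> omega

theorem unzigzag_lt (hr : r ∈ Icc 1 w) : unzigzag w r < w := by
  rw [mem_Icc] at hr; unfold unzigzag; split_ifs <;> omega

theorem zigzag_unzigzag (hr : r ≤ w) : zigzag w (unzigzag w r) = r := by
  unfold zigzag unzigzag; split_ifs <;> omega

theorem unzigzag_zigzag (hi : i ≤ w) : unzigzag w (zigzag w i) = i := by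
  unfold zigzag unzigzag; split_ifs <;> omega

end Zigzag

def gapsBelowMax (Y : Finset ℕ) : Finset ℕ := range (Y.sup id) \ Y

section Crossings

variable {w : ℕ} {Z : Finset (Fin (w + 2))} {i : Fin (w + 2)}

theorem exists_zigzag_lt_of_isCrossing (hZ : ∀ z ∈ Z, (z : ℕ) < w) {j : Fin (w + 2)}
    (hc : isCrossing (permOfRLMax Z) i j) :
    i ∉ Z ∧ i ≠ Fin.last (w + 1) ∧ ∃ z ∈ Z, zigzag w i < zigzag w z := by
  obtain ⟨hij, hσ⟩ := lt_and_apply_lt_of_isCrossing hc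
  have hi : ¬ (i ∈ Z ∨ i = Fin.last (w + 1)) := fun hi =>
    (isRLMax_permOfRLMax hi j hij).not_gt hσ
  obtain ⟨hiZ, hiL⟩ := not_or.1 hi
  obtain ⟨hjR, hjmin⟩ := mem_and_le_of_permOfRLMax_lt hij hσ
  have hσi := permOfRLMax_apply_of_notMem hi
  have hσj : (permOfRLMax Z j : ℕ) = w + 1 - succMaxBelow Z i := by
    rw [permOfRLMax_apply_of_mem hjR, succMaxBelow_eq_of_le hiZ hij.le hjmin]
  have hiw := Nat.le_of_lt_succ (Fin.val_lt_last hiL)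
  refine ⟨hiZ, hiL, ?_⟩
  rcases hc with ⟨-, hjσ, -⟩ | ⟨-, hσji, -⟩
  · rw [Fin.lt_def, hσi] at hjσ
    have hjZ : j ∈ Z := hjR.resolve_right fun h => by simp [h] at hjσ; omega
    have : (i : ℕ) < j := hij
    exact ⟨j, hjZ, (zigzag_lt_zigzag_iff hiw (hZ j hjZ).le).2 (Or.inl ⟨this, by omega⟩)⟩
  · rw [Fin.le_def, hσj] at hσji
    rcases succMaxBelow_eq_zero_or Z i with h | ⟨z, hz, hzi, h⟩
    · omega
    · exact ⟨z, hz, (zigzag_lt_zigzag_iff hiw (hZ z hz).le).2 (Or.inr ⟨hzi, by omega⟩)⟩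

theorem exists_isCrossing_of_zigzag_lt (hZ : ∀ z ∈ Z, (z : ℕ) < w) (hiZ : i ∉ Z)
    (hiL : i ≠ Fin.last (w + 1)) {z : Fin (w + 2)} (hz : z ∈ Z)
    (hlt : zigzag w i < zigzag w z) : ∃ j, isCrossing (permOfRLMax Z) i j := by
  have hi : ¬ (i ∈ Z ∨ i = Fin.last (w + 1)) := by simp [hiZ, hiL]
  obtain ⟨j, hij, hjmin, hσj⟩ := exists_permOfRLMax_eq hi
  have hσi := permOfRLMax_apply_of_notMem hi
  have := succMaxBelow_le Z i
  have hiw := Nat.le_of_lt_succ (Fin.val_lt_last hiL)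
  have hσ : permOfRLMax Z i < permOfRLMax Z j := by rw [Fin.lt_def]; omega
  refine ⟨j, ?_⟩
  rcases (zigzag_lt_zigzag_iff hiw (hZ z hz).le).1 hlt with ⟨hiz, hsum⟩ | ⟨hzi, hsum⟩
  · have : (j : ℕ) ≤ z := hjmin z hz hiz
    exact Or.inl ⟨hij, by rw [Fin.lt_def, hσi]; omega, hσ⟩
  · have := lt_succMaxBelow hz hzi
    exact Or.inr ⟨hσ, by rw [Fin.le_def, hσj]; omega, hij⟩

theorem crs_permOfRLMax (hZ : ∀ z ∈ Z, (z : ℕ) < w) :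
    crs (permOfRLMax Z) = #(gapsBelowMax (Z.image fun z : Fin (w + 2) => zigzag w z)) := by
  have hiff : ∀ i, (∃ j, isCrossing (permOfRLMax Z) i j) ↔
      i ∉ Z ∧ i ≠ Fin.last (w + 1) ∧ ∃ z ∈ Z, zigzag w i < zigzag w z := fun i =>
    ⟨fun ⟨_, hc⟩ => exists_zigzag_lt_of_isCrossing hZ hc,
      fun ⟨hiZ, hiL, _, hz, hlt⟩ => exists_isCrossing_of_zigzag_lt hZ hiZ hiL hz hlt⟩
  rw [crs_eq_card_filter_exists_isCrossing avoids123_and_avoids132_permOfRLMax]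
  simp_rw [hiff]
  refine card_bij (fun i _ => zigzag w i) (fun i hi => ?_) (fun i hi i' hi' h => ?_) (fun r hr => ?_)
  · simp only [mem_filter, mem_univ, true_and] at hi
    obtain ⟨hiZ, hiL, z, hz, hlt⟩ := hi
    simp only [gapsBelowMax, mem_sdiff, mem_range, Finset.lt_sup_iff, mem_image, id]
    refine ⟨⟨_, ⟨z, hz, rfl⟩, hlt⟩, ?_⟩
    rintro ⟨z', hz', h⟩
    have := Fin.val_lt_last hiL
    exact hiZ (Fin.ext (eq_of_zigzag_eq (hZ z' hz').le (by omega) h) ▸ hz')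
  · simp only [mem_filter, mem_univ, true_and] at hi hi'
    have := Fin.val_lt_last hi.2.1
    have := Fin.val_lt_last hi'.2.1
    exact Fin.ext (eq_of_zigzag_eq (by omega) (by omega) h)
  · simp only [gapsBelowMax, mem_sdiff, mem_range, Finset.lt_sup_iff, mem_image, id] at hr
    obtain ⟨⟨_, ⟨z, hz, rfl⟩, hlt⟩, hrZ⟩ := hr
    have hrw : r ≤ w := by
      have := zigzag_mem_Icc (hZ z hz); rw [mem_Icc] at this; omega
    refine ⟨⟨unzigzag w r, by have := unzigzag_le hrw; omega⟩, ?_, zigzag_unzigzag hrw⟩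
    simp only [mem_filter, mem_univ, true_and]
    refine ⟨fun h => hrZ ⟨_, h, zigzag_unzigzag hrw⟩, fun h => ?_, z, hz, ?_⟩
    · have := unzigzag_le hrw
      simp only [Fin.ext_iff, Fin.val_last] at h
      omega
    · rwa [zigzag_unzigzag hrw]

end Crossings

section Family

variable {w : ℕ}

theorem eq_permOfRLMax {σ : Perm (Fin (w + 2))} (h : avoids123 σ ∧ avoids132 σ) :
    σ = permOfRLMax ((rlMaxima σ).erase (Fin.last (w + 1))) := by
  have hS : ∀ i, i ∈ (rlMaxima σ).erase (Fin.last (w + 1)) ∨ i = Fin.last (w + 1) ↔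
      σ.IsRLMax i := by
    intro i
    by_cases hi : i = Fin.last (w + 1)
    · simp [hi, isRLMax_last]
    · simp [hi, rlMaxima]
  refine Equiv.Perm.eq_of_isRLMax {i | σ.IsRLMax i} (fun i hi => hi)
    (fun i hi => isRLMax_permOfRLMax ((hS i).2 hi)) fun i hi => Fin.ext ?_
  have := apply_add_add_two_of_not_isRLMax h hi
  rw [permOfRLMax_apply_of_notMem (mt (hS i).1 hi)]
  omega

theorem lt_of_mem_rlMaxima_erase_last {σ : Perm (Fin (w + 2))}
    (hw : σ ⟨w, by omega⟩ = ⟨0, by omega⟩) {z : Fin (w + 2)}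
    (hz : z ∈ (rlMaxima σ).erase (Fin.last (w + 1))) : (z : ℕ) < w := by
  obtain ⟨hzL, hz⟩ := mem_erase.1 hz
  refine (Nat.le_of_lt_succ (Fin.val_lt_last hzL)).lt_of_ne fun hzw => ?_
  have := (mem_filter.1 hz).2 (Fin.last (w + 1)) (lt_of_le_of_ne (Fin.le_last z) hzL)
  rw [show z = ⟨w, by omega⟩ from Fin.ext hzw, hw] at this
  exact Fin.not_lt_zero _ this

theorem card_filter_avoids_eq_card_filter_gapsBelowMax (k : ℕ) :
    #(univ.filter fun σ : Perm (Fin (w + 2)) => avoids123 σ ∧ avoids132 σ ∧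
        σ ⟨w, by omega⟩ = ⟨0, by omega⟩ ∧ crs σ = k) =
      #(univ.filter fun Z : Finset (Fin (w + 2)) => (∀ z ∈ Z, (z : ℕ) < w) ∧
        #(gapsBelowMax (Z.image fun z : Fin (w + 2) => zigzag w z)) = k) := by
  refine card_nbij' (fun σ => (rlMaxima σ).erase (Fin.last (w + 1))) permOfRLMax
    (fun σ hσ => ?_) (fun Z hZ => ?_) (fun σ hσ => ?_) (fun Z hZ => ?_)
  · simp only [coe_filter, mem_univ, true_and, Set.mem_ofPred_eq] at hσ ⊢
    obtain ⟨h123, h132, hw, rfl⟩ := hσ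
    have hZ := fun z => lt_of_mem_rlMaxima_erase_last hw (z := z)
    refine ⟨hZ, ?_⟩
    rw [← crs_permOfRLMax hZ, ← eq_permOfRLMax ⟨h123, h132⟩]
  · simp only [coe_filter, mem_univ, true_and, Set.mem_ofPred_eq] at hZ ⊢
    obtain ⟨hZ, rfl⟩ := hZ
    refine ⟨avoids123_and_avoids132_permOfRLMax.1, avoids123_and_avoids132_permOfRLMax.2,
      Fin.ext ?_, crs_permOfRLMax hZ⟩
    rw [permOfRLMax_apply_of_notMem]
    · simp
    · simp only [not_or]
      exact ⟨fun h => (hZ _ h).false, by simp [Fin.ext_iff]⟩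
  · simp only [coe_filter, mem_univ, true_and, Set.mem_ofPred_eq] at hσ
    exact (eq_permOfRLMax ⟨hσ.1, hσ.2.1⟩).symm
  · simp only [coe_filter, mem_univ, true_and, Set.mem_ofPred_eq] at hZ
    exact rlMaxima_permOfRLMax_erase_last hZ.1

theorem card_filter_gapsBelowMax_image_zigzag (k : ℕ) :
    #(univ.filter fun Z : Finset (Fin (w + 2)) => (∀ z ∈ Z, (z : ℕ) < w) ∧
        #(gapsBelowMax (Z.image fun z : Fin (w + 2) => zigzag w z)) = k) =
      #((Icc 1 w).powerset.filter fun Y => #(gapsBelowMax Y) = k) := by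
  have hval : ∀ {r}, r ∈ Icc 1 w → (Fin.ofNat (w + 2) (unzigzag w r) : ℕ) = unzigzag w r :=
    fun hr => by rw [Fin.val_ofNat, Nat.mod_eq_of_lt (by have := unzigzag_lt hr; omega)]
  have hleft : ∀ {Z : Finset (Fin (w + 2))}, (∀ z ∈ Z, (z : ℕ) < w) →
      ((Z.image fun z : Fin (w + 2) => zigzag w z).image
        fun r => Fin.ofNat (w + 2) (unzigzag w r)) = Z := fun hZ => by
    rw [image_image]
    refine (image_congr fun z hz => ?_).trans image_id
    simp [unzigzag_zigzag (hZ z hz).le]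
  have hright : ∀ {Y : Finset ℕ}, Y ⊆ Icc 1 w →
      ((Y.image fun r => Fin.ofNat (w + 2) (unzigzag w r)).image
        fun z : Fin (w + 2) => zigzag w z) = Y := fun hY => by
    rw [image_image]
    refine (image_congr fun r hr => ?_).trans image_id
    simp only [Function.comp_apply, hval (hY hr), id]
    exact zigzag_unzigzag (mem_Icc.1 (hY hr)).2
  refine card_nbij' (fun Z => Z.image fun z : Fin (w + 2) => zigzag w z)
    (fun Y => Y.image fun r => Fin.ofNat (w + 2) (unzigzag w r))
    (fun Z hZ => ?_) (fun Y hY => ?_) (fun Z hZ => hleft ?_) (fun Y hY => hright ?_)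
  · simp only [mem_coe, mem_filter, mem_univ, true_and, mem_powerset] at hZ ⊢
    refine ⟨fun r hr => ?_, hZ.2⟩
    obtain ⟨z, hz, rfl⟩ := mem_image.1 hr
    exact zigzag_mem_Icc (hZ.1 z hz)
  · simp only [mem_coe, mem_filter, mem_univ, true_and, mem_powerset] at hY ⊢
    refine ⟨fun z hz => ?_, by rw [hright hY.1, hY.2]⟩
    obtain ⟨r, hr, rfl⟩ := mem_image.1 hz
    rw [hval (hY.1 hr)]
    exact unzigzag_lt (hY.1 hr)
  · simpa using (mem_filter.1 hZ).2.1
  · simpa using (mem_filter.1 hY).1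

end Family

section GapCounting

def flipBelowMax (Y : Finset ℕ) : Finset ℕ := Icc 1 (Y.sup id) \ Y.erase (Y.sup id)

variable {Y : Finset ℕ}

theorem subset_Icc_sup (h0 : 0 ∉ Y) : Y ⊆ Icc 1 (Y.sup id) := fun _ hy =>
  mem_Icc.2 ⟨Nat.one_le_iff_ne_zero.2 fun h => h0 (h ▸ hy), le_sup (f := id) hy⟩

theorem sup_mem_or_eq_zero (Y : Finset ℕ) : Y.sup id ∈ Y ∨ Y.sup id = 0 := by
  rcases Y.eq_empty_or_nonempty with rfl | hY
  · simp
  · obtain ⟨y, hy, h⟩ := exists_mem_eq_sup Y hY id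
    exact Or.inl (h ▸ hy)

theorem zero_notMem_flipBelowMax : 0 ∉ flipBelowMax Y := by simp [flipBelowMax]

theorem sup_flipBelowMax (h0 : 0 ∉ Y) : (flipBelowMax Y).sup id = Y.sup id := by
  refine le_antisymm (Finset.sup_le fun y hy => (mem_Icc.1 (mem_sdiff.1 hy).1).2) ?_
  rcases sup_mem_or_eq_zero Y with hm | hm
  · exact le_sup (f := id) (mem_sdiff.2 ⟨subset_Icc_sup h0 hm, notMem_erase _ _⟩)
  · simp [hm]

theorem flipBelowMax_flipBelowMax (h0 : 0 ∉ Y) : flipBelowMax (flipBelowMax Y) = Y := by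
  have hsub := subset_Icc_sup h0
  have hm := sup_mem_or_eq_zero Y
  rw [flipBelowMax, sup_flipBelowMax h0]
  ext y
  simp only [flipBelowMax, mem_sdiff, mem_erase, mem_Icc]
  by_cases hy : y = Y.sup id
  · subst hy
    rcases hm with hm | hm
    · simpa [hm] using (mem_Icc.1 (hsub hm)).1
    · simp only [hm]
      exact ⟨fun h => absurd h.1.1 (by omega), fun h => absurd ((mem_Icc.1 (hsub h)).1) (by omega)⟩
  · have := fun h : y ∈ Y => mem_Icc.1 (hsub h)
    tauto

theorem card_flipBelowMax (h0 : 0 ∉ Y) : #(flipBelowMax Y) = #(gapsBelowMax Y) := by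
  have hsub := subset_Icc_sup h0
  have hinter : Y ∩ range (Y.sup id) = Y.erase (Y.sup id) := by
    ext y
    simp only [mem_inter, mem_range, mem_erase]
    have : ∀ y ∈ Y, y ≤ Y.sup id := fun y h => (mem_Icc.1 (hsub h)).2
    constructor
    · rintro ⟨hy, hlt⟩; exact ⟨hlt.ne, hy⟩
    · rintro ⟨hne, hy⟩; exact ⟨hy, lt_of_le_of_ne (this _ hy) hne⟩
  rw [flipBelowMax, gapsBelowMax, card_sdiff, card_sdiff, hinter,
    inter_eq_left.2 ((erase_subset _ _).trans hsub), card_range, Nat.card_Icc, Nat.add_sub_cancel]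

theorem card_filter_card_gapsBelowMax (w k : ℕ) :
    #((Icc 1 w).powerset.filter fun Y => #(gapsBelowMax Y) = k) = w.choose k := by
  have h0 : ∀ {Y : Finset ℕ}, Y ⊆ Icc 1 w → 0 ∉ Y := fun hY h => by simpa using hY h
  have hflip : ∀ {Y : Finset ℕ}, Y ⊆ Icc 1 w → flipBelowMax Y ⊆ Icc 1 w := fun hY =>
    (sdiff_subset).trans (Icc_subset_Icc_right (Finset.sup_le fun y hy => (mem_Icc.1 (hY hy)).2))
  rw [show w.choose k = #((Icc 1 w).powersetCard k) by simp]
  refine card_nbij' flipBelowMax flipBelowMax (fun Y hY => ?_) (fun Y hY => ?_)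
    (fun Y hY => flipBelowMax_flipBelowMax (h0 ?_)) (fun Y hY => flipBelowMax_flipBelowMax (h0 ?_))
  · simp only [mem_coe, mem_filter, mem_powerset, mem_powersetCard] at hY ⊢
    exact ⟨hflip hY.1, (card_flipBelowMax (h0 hY.1)).trans hY.2⟩
  · simp only [mem_coe, mem_filter, mem_powerset, mem_powersetCard] at hY ⊢
    exact ⟨hflip hY.1, by rw [← card_flipBelowMax zero_notMem_flipBelowMax,
      flipBelowMax_flipBelowMax (h0 hY.1), hY.2]⟩
  · simpa using (mem_filter.1 hY).1
  · simpa using (mem_powersetCard.1 hY).1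

end GapCounting

theorem count_123_132_penultimate (n k : ℕ) (hn : 2 ≤ n) :
    (Finset.univ.filter (fun σ : Equiv.Perm (Fin n) =>
        avoids123 σ ∧ avoids132 σ ∧
          σ (⟨n - 2, by omega⟩ : Fin n) = (⟨0, by omega⟩ : Fin n) ∧ crs σ = k)).card =
      Nat.choose (n - 2) k := by
  obtain ⟨w, rfl⟩ : ∃ w, n = w + 2 := ⟨n - 2, by omega⟩
  simp only [Nat.add_sub_cancel]
  rw [card_filter_avoids_eq_card_filter_gapsBelowMax, card_filter_gapsBelowMax_image_zigzag,
    card_filter_card_gapsBelowMax]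
end

section
/- For all n ≥ 1, ∑_{σ∈S_n(321,213)} q^{crs(σ)} = 1 + ∑_{k=1}^{n−1} (1 + q^k + q^{2k} + … + q^{(n−k−1)k}), i.e., 1 + ∑_{k=1}^{n−1} [n−k]_{q^k} where [m]_t = 1+t+…+t^{m−1}. -/
open Finset Polynomial Equiv

attribute [local instance] Classical.propDecidable

def rf (n K i p : ℕ) : ℕ :=
  if p < n - K - i - 1 then p else if p < n - i - 1 then p + i + 1 else p - K

lemma rf_lt {n K i : ℕ} (h2 : K + i + 1 ≤ n) {p : ℕ} (hp : p < n) : rf n K i p < n := by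
  unfold rf; split_ifs <;> omega

lemma rf_inj {n K i : ℕ} (h1 : 1 ≤ K) (h2 : K + i + 1 ≤ n) {p q : ℕ} (hp : p < n)
    (hq : q < n) (h : rf n K i p = rf n K i q) : p = q := by
  unfold rf at h; split_ifs at h <;> omega

def rhoF (n K i : ℕ) : Fin n → Fin n := fun p =>
  if h : rf n K i p.val < n then ⟨_, h⟩ else p

noncomputable def rho (n K i : ℕ) : Equiv.Perm (Fin n) :=
  if h : Function.Bijective (rhoF n K i) then Equiv.ofBijective _ h else 1

lemma rho_val {n K i : ℕ} (h1 : 1 ≤ K) (h2 : K + i + 1 ≤ n) (p : Fin n) :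
    ((rho n K i) p).val = rf n K i p.val := by
  have hinj : Function.Injective (rhoF n K i) := by
    intro a b hab
    unfold rhoF at hab
    rw [dif_pos (rf_lt h2 a.isLt), dif_pos (rf_lt h2 b.isLt)] at hab
    exact Fin.val_injective (rf_inj h1 h2 a.isLt b.isLt (congrArg Fin.val hab))
  have hbij := Finite.injective_iff_bijective.mp hinj
  rw [rho, dif_pos hbij]
  show ((rhoF n K i) p).val = _
  rw [rhoF]; rw [dif_pos (rf_lt h2 p.isLt)]

lemma one_avoids (n : ℕ) : avoids321 (1 : Equiv.Perm (Fin n)) ∧ avoids213 (1 : Equiv.Perm (Fin n)) := by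
  constructor <;>
  · rintro ⟨a, b, c, hab, hbc, h1, h2⟩
    simp only [Equiv.Perm.one_apply, Fin.lt_def] at *
    omega

lemma crs_one (n : ℕ) : crs (1 : Equiv.Perm (Fin n)) = 0 := by
  rw [crs, Finset.card_eq_zero, Finset.filter_eq_empty_iff]
  rintro ⟨a, b⟩ _
  rintro (⟨h1, h2, h3⟩ | ⟨h1, h2, h3⟩) <;>
  · simp only [Equiv.Perm.one_apply, Fin.lt_def, Fin.le_def] at *
    omega

lemma rho_avoids {n K i : ℕ} (h1 : 1 ≤ K) (h2 : K + i + 1 ≤ n) :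
    avoids321 (rho n K i) ∧ avoids213 (rho n K i) := by
  constructor <;>
  · rintro ⟨a, b, c, hab, hbc, hx, hy⟩
    rw [Fin.lt_def] at hab hbc hx hy
    rw [rho_val h1 h2, rho_val h1 h2] at hx hy
    have ha := a.isLt; have hb := b.isLt; have hc := c.isLt
    unfold rf at hx hy
    split_ifs at hx hy <;> omega

lemma classify {n : ℕ} (σ : Equiv.Perm (Fin n)) (hA : avoids321 σ) (hB : avoids213 σ)
    (hne : σ ≠ 1) : ∃ K i : ℕ, 1 ≤ K ∧ K + i + 1 ≤ n ∧ σ = rho n K i := by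
  -- step 1: there is a point with σ p < p
  have hT : ∃ p : Fin n, (σ p).val < p.val := by
    by_contra h
    push_neg at h
    apply hne
    have hsum : ∑ p : Fin n, p.val = ∑ p : Fin n, (σ p).val := (Equiv.sum_comp σ (fun p => p.val)).symm
    have := (Finset.sum_eq_sum_iff_of_le (fun p _ => h p)).mp hsum
    ext p
    exact ((this p (Finset.mem_univ p)).symm : ((σ p).val = p.val))
  -- minimal such t
  have hFne : (Finset.univ.filter (fun p : Fin n => (σ p).val < p.val)).Nonempty := by
    obtain ⟨p, hp⟩ := hT
    exact ⟨p, Finset.mem_filter.mpr ⟨Finset.mem_univ p, hp⟩⟩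
  obtain ⟨t, ht, htmin⟩ : ∃ t : Fin n, (σ t).val < t.val ∧
      ∀ p : Fin n, (σ p).val < p.val → t.val ≤ p.val := by
    refine ⟨(Finset.univ.filter (fun p : Fin n => (σ p).val < p.val)).min' hFne, ?_, ?_⟩
    · exact (Finset.mem_filter.mp (Finset.min'_mem _ hFne)).2
    · intro p hp
      exact Fin.le_def.mp (Finset.min'_le _ p (Finset.mem_filter.mpr ⟨Finset.mem_univ p, hp⟩))
  -- key counting lemma: any inversion (a,b) has σ b < b
  have L3 : ∀ a b : Fin n, a.val < b.val → (σ b).val < (σ a).val → (σ b).val < b.val := by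
    intro a b hab hba
    by_contra hb
    push_neg at hb
    have himg : ∀ c ∈ Finset.Ioi b, σ c ∈ Finset.Ioo (σ b) (σ a) := by
      intro c hc
      rw [Finset.mem_Ioi] at hc
      rw [Finset.mem_Ioo]
      constructor
      · rcases lt_trichotomy (σ c) (σ b) with h | h | h
        · exact absurd ⟨a, b, c, Fin.lt_def.mpr hab, hc, h, Fin.lt_def.mpr hba⟩ hA
        · exact absurd (σ.injective h) (by intro hh; rw [hh] at hc; exact lt_irrefl _ hc)
        · exact h
      · rcases lt_trichotomy (σ c) (σ a) with h | h | h
        · exact h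
        · exact absurd (σ.injective h) (by
            intro hh; rw [hh] at hc
            exact absurd (Fin.lt_def.mp hc) (by omega))
        · exact absurd ⟨a, b, c, Fin.lt_def.mpr hab, hc, Fin.lt_def.mpr hba, h⟩ hB
    have hcard := Finset.card_le_card_of_injOn σ himg (σ.injective.injOn)
    rw [Fin.card_Ioi, Fin.card_Ioo] at hcard
    have := b.isLt; have := (σ a).isLt
    omega
  -- monotone where the larger point is not a descent point
  have mono : ∀ a b : Fin n, a.val < b.val → ¬ (σ b).val < b.val → (σ a).val < (σ b).val := by
    intro a b hab hb
    rcases lt_trichotomy ((σ a).val) ((σ b).val) with h | h | h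
    · exact h
    · exact absurd (σ.injective (Fin.val_injective h)) (by intro hh; rw [hh] at hab; omega)
    · exact absurd (L3 a b hab h) hb
  -- there is a₀ < t with σ t < σ a₀
  have ha0 : ∃ a : Fin n, a.val < t.val ∧ (σ t).val < (σ a).val := by
    by_contra h
    push_neg at h
    have himg : ∀ c ∈ Finset.Iic t, σ c ∈ Finset.Iic (σ t) := by
      intro c hc
      rw [Finset.mem_Iic] at hc ⊢
      rcases eq_or_lt_of_le hc with h' | h'
      · rw [h']
      · exact Fin.le_def.mpr (h c (Fin.lt_def.mp h'))
    have hcard := Finset.card_le_card_of_injOn σ himg (σ.injective.injOn)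
    rw [Fin.card_Iic, Fin.card_Iic] at hcard
    omega
  obtain ⟨a0, ha0t, ha0⟩ := ha0
  -- increasing on [t, n)
  have hgt : ∀ c : Fin n, t.val < c.val → (σ t).val < (σ c).val ∧ (σ c).val < (σ a0).val := by
    intro c hc
    constructor
    · rcases lt_trichotomy ((σ t).val) ((σ c).val) with h | h | h
      · exact h
      · exact absurd (σ.injective (Fin.val_injective h)) (by intro hh; rw [hh] at ha0; omega)
      · exact absurd ⟨a0, t, c, Fin.lt_def.mpr ha0t, Fin.lt_def.mpr hc, Fin.lt_def.mpr h,
          Fin.lt_def.mpr ha0⟩ hA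
    · rcases lt_trichotomy ((σ c).val) ((σ a0).val) with h | h | h
      · exact h
      · exact absurd (σ.injective (Fin.val_injective h)) (by intro hh; rw [hh] at hc; omega)
      · exact absurd ⟨a0, t, c, Fin.lt_def.mpr ha0t, Fin.lt_def.mpr hc, Fin.lt_def.mpr ha0,
          Fin.lt_def.mpr h⟩ hB
  have incr : ∀ c1 c2 : Fin n, t.val ≤ c1.val → c1.val < c2.val → (σ c1).val < (σ c2).val := by
    intro c1 c2 hc1 hc12
    rcases eq_or_lt_of_le hc1 with h | h
    · have : c1 = t := Fin.val_injective h.symm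
      rw [this]
      exact (hgt c2 (by omega)).1
    · rcases lt_trichotomy ((σ c1).val) ((σ c2).val) with hh | hh | hh
      · exact hh
      · exact absurd (σ.injective (Fin.val_injective hh)) (by intro e; rw [e] at hc12; omega)
      · exact absurd ⟨a0, c1, c2, Fin.lt_def.mpr (by omega), Fin.lt_def.mpr hc12,
          Fin.lt_def.mpr hh, Fin.lt_def.mpr (hgt c1 h).2⟩ hA
  -- consecutive values on [t, n)
  have consec : ∀ p : Fin n, t.val ≤ p.val → ∀ h : p.val + 1 < n,
      (σ ⟨p.val + 1, h⟩).val = (σ p).val + 1 := by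
    intro p hp h
    set q : Fin n := ⟨p.val + 1, h⟩ with hq
    have hpq : (σ p).val < (σ q).val := incr p q hp (by simp [hq])
    by_contra hcon
    have hq2 : (σ p).val + 2 ≤ (σ q).val := by omega
    have hwlt : (σ p).val + 1 < n := by have := (σ q).isLt; omega
    set w : Fin n := ⟨(σ p).val + 1, hwlt⟩ with hw
    set r : Fin n := σ.symm w with hr
    have hrw : σ r = w := σ.apply_symm_apply w
    have hrp : r.val < p.val := by
      rcases lt_trichotomy r.val p.val with h1 | h1 | h1
      · exact h1
      · exfalso
        have : r = p := Fin.val_injective h1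
        rw [this] at hrw
        have := congrArg Fin.val hrw
        simp [hw] at this
      · exfalso
        rcases lt_trichotomy r.val q.val with h2 | h2 | h2
        · have : r.val = q.val := by simp [hq] at h2 ⊢; omega
          have : r = q := Fin.val_injective this
          rw [this] at hrw
          have := congrArg Fin.val hrw
          simp [hw] at this
          omega
        · have : r = q := Fin.val_injective h2
          rw [this] at hrw
          have := congrArg Fin.val hrw
          simp [hw] at this
          omega
        · have := incr q r (by simp [hq]; omega) h2
          rw [hrw] at this
          simp [hw] at this
          omega
    exact hB ⟨r, p, q, Fin.lt_def.mpr hrp, Fin.lt_def.mpr (by simp [hq]),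
      Fin.lt_def.mpr (by rw [hrw]; simp [hw]), Fin.lt_def.mpr (by rw [hrw]; simp [hw]; omega)⟩
  -- linear values on [t,n)
  have lin : ∀ d : ℕ, ∀ h : t.val + d < n, (σ ⟨t.val + d, h⟩).val = (σ t).val + d := by
    intro d
    induction d with
    | zero => intro h; congr 1
    | succ d ih =>
      intro h
      have h' : t.val + d < n := by omega
      have := consec ⟨t.val + d, h'⟩ (by simp) (by simp; omega)
      have h2 : (⟨(⟨t.val + d, h'⟩ : Fin n).val + 1, by simp; omega⟩ : Fin n) = ⟨t.val + (d+1), h⟩ := by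
        simp [Fin.ext_iff]; omega
      rw [h2] at this
      rw [this, ih h']
      omega
  set K : ℕ := t.val - (σ t).val with hK
  set i : ℕ := n - 1 - t.val with hi
  have h1 : 1 ≤ K := by omega
  have htn : t.val < n := t.isLt
  have h2 : K + i + 1 ≤ n := by omega
  refine ⟨K, i, h1, h2, ?_⟩
  -- value description
  have hs : n - K - i - 1 = (σ t).val := by omega
  have ht' : n - i - 1 = t.val := by omega
  -- values on [t, n)
  have hhigh : ∀ p : Fin n, t.val ≤ p.val → (σ p).val = p.val - K := by
    intro p hp
    have hd : t.val + (p.val - t.val) < n := by have := p.isLt; omega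
    have := lin (p.val - t.val) hd
    have he : (⟨t.val + (p.val - t.val), hd⟩ : Fin n) = p := Fin.val_injective (by simp; omega)
    rw [he] at this
    omega
  -- σ p ≥ p below t
  have hlow : ∀ p : Fin n, p.val < t.val → p.val ≤ (σ p).val := by
    intro p hp
    by_contra h
    have := htmin p (by omega)
    omega
  -- identity below s
  have hid : ∀ p : Fin n, p.val < (σ t).val → (σ p).val = p.val := by
    intro p hp
    by_contra hne'
    have hplt : p.val < t.val := by omega
    have hpgt : p.val < (σ p).val := by have := hlow p hplt; omega
    have himg : ∀ c ∈ Finset.Ici p, σ c ∈ Finset.Ioi p := by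
      intro c hc
      rw [Finset.mem_Ici] at hc
      rw [Finset.mem_Ioi, Fin.lt_def]
      rcases lt_trichotomy c.val t.val with h3 | h3 | h3
      · rcases eq_or_lt_of_le (Fin.le_def.mp hc) with h4 | h4
        · have : c = p := Fin.val_injective h4.symm
          rw [this]; omega
        · have := mono p c h4 (by have := hlow c h3; omega)
          omega
      · have : c = t := Fin.val_injective h3
        rw [this]; omega
      · have := (hgt c h3).1
        omega
    have hcard := Finset.card_le_card_of_injOn σ himg (σ.injective.injOn)
    rw [Fin.card_Ici, Fin.card_Ioi] at hcard
    omega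
  -- middle block
  have hmid : ∀ p : Fin n, (σ t).val ≤ p.val → p.val < t.val → (σ p).val = p.val + i + 1 := by
    intro p hps hpt
    -- lower bound: σ p ≥ n - K
    have hge : ∀ c : Fin n, (σ t).val ≤ c.val → c.val < t.val → n - K ≤ (σ c).val := by
      intro c hcs hct
      by_contra hcon
      push_neg at hcon
      have hclow := hlow c hct
      -- σ c ∈ [σ t, n - K), so σ c = σ x for some x ≥ t
      have hd : t.val + ((σ c).val - (σ t).val) < n := by omega
      have := lin ((σ c).val - (σ t).val) hd
      have : σ (⟨t.val + ((σ c).val - (σ t).val), hd⟩ : Fin n) = σ c := by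
        apply Fin.val_injective
        rw [this]
        omega
      have heq := σ.injective this
      have := congrArg Fin.val heq
      simp at this
      omega
    -- counting for exact value, lower bound
    have hpgeK : n - K ≤ (σ p).val := hge p hps hpt
    have hslt : (σ t).val < n := by omega
    have hcard1 : p.val - (σ t).val + 1 ≤ (σ p).val + 1 - (n - K) := by
      have himg : ∀ c ∈ Finset.Icc (⟨(σ t).val, hslt⟩ : Fin n) p, σ c ∈
          Finset.Icc (σ (⟨(σ t).val, hslt⟩ : Fin n)) (σ p) := by
        intro c hc
        rw [Finset.mem_Icc] at hc ⊢
        obtain ⟨hc1, hc2⟩ := hc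
        constructor
        · rcases eq_or_lt_of_le (Fin.le_def.mp hc1) with h4 | h4
          · rw [Fin.val_injective (h4 : ((⟨(σ t).val, hslt⟩ : Fin n)).val = c.val)]
          · rw [Fin.val_mk] at h4
            refine le_of_lt (Fin.lt_def.mpr (mono _ c ?_ ?_))
            · rw [Fin.val_mk]; exact h4
            · have hcp := Fin.le_def.mp hc2
              have := hlow c (by omega)
              omega
        · rcases eq_or_lt_of_le (Fin.le_def.mp hc2) with h4 | h4
          · rw [Fin.val_injective h4]
          · exact le_of_lt (Fin.lt_def.mpr (mono c p h4 (by have := hlow p hpt; omega)))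
      have hcard := Finset.card_le_card_of_injOn σ himg (σ.injective.injOn)
      rw [Fin.card_Icc, Fin.card_Icc] at hcard
      simp only [Fin.val_mk] at hcard
      have h5 := hge (⟨(σ t).val, hslt⟩ : Fin n) (by rw [Fin.val_mk]) (by rw [Fin.val_mk]; omega)
      omega
    -- upper bound
    have hcard2 : t.val - p.val ≤ n - (σ p).val := by
      have himg : ∀ c ∈ Finset.Icc p (⟨t.val - 1, by omega⟩ : Fin n), σ c ∈ Finset.Ici (σ p) := by
        intro c hc
        rw [Finset.mem_Icc] at hc
        rw [Finset.mem_Ici]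
        obtain ⟨hc1, hc2⟩ := hc
        rcases eq_or_lt_of_le (Fin.le_def.mp hc1) with h4 | h4
        · rw [Fin.val_injective h4]
        · exact le_of_lt (Fin.lt_def.mpr (mono p c h4 (by
            have hct : c.val < t.val := by have := Fin.le_def.mp hc2; simp at this; omega
            have := hlow c hct; omega)))
      have hcard := Finset.card_le_card_of_injOn σ himg (σ.injective.injOn)
      rw [Fin.card_Icc, Fin.card_Ici] at hcard
      simp at hcard
      omega
    have := (σ p).isLt
    omega
  -- conclude
  apply Equiv.ext
  intro p
  apply Fin.val_injective
  rw [rho_val h1 h2]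
  unfold rf
  rcases lt_trichotomy p.val t.val with hp | hp | hp
  · rcases Nat.lt_or_ge p.val ((σ t).val) with hp2 | hp2
    · rw [if_pos (by omega)]
      exact hid p hp2
    · rw [if_neg (by omega), if_pos (by omega)]
      exact hmid p hp2 hp
  · rw [if_neg (by omega), if_neg (by omega)]
    have := hhigh p (by omega)
    omega
  · rw [if_neg (by omega), if_neg (by omega)]
    exact hhigh p (by omega)

lemma card_filter_fin (n : ℕ) (P : ℕ → Prop) [DecidablePred P]
    [DecidablePred (fun q : Fin n => P q.val)] :
    (Finset.univ.filter (fun q : Fin n => P q.val)).card = ((Finset.range n).filter P).card := by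
  apply Finset.card_bij (fun q _ => q.val)
  · intro q hq
    rw [Finset.mem_filter] at hq ⊢
    exact ⟨Finset.mem_range.mpr q.isLt, hq.2⟩
  · intro a _ b _ h
    exact Fin.val_injective h
  · intro b hb
    rw [Finset.mem_filter, Finset.mem_range] at hb
    exact ⟨⟨b, hb.1⟩, Finset.mem_filter.mpr ⟨Finset.mem_univ _, hb.2⟩, rfl⟩

lemma minsum_aux (b : ℕ) : ∀ a : ℕ, ∑ j ∈ Finset.range a, min j (b+1) =
    (∑ j ∈ Finset.range a, min j b) + (a - (b+1)) := by
  intro a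
  induction a with
  | zero => simp
  | succ a ih =>
    rw [Finset.sum_range_succ, Finset.sum_range_succ, ih]
    omega

lemma minsum (a b : ℕ) : (∑ j ∈ Finset.range a, min j b) +
    (∑ j ∈ Finset.range (b+1), min j a) = a * b := by
  induction b with
  | zero => simp
  | succ b ih =>
    rw [minsum_aux, Finset.sum_range_succ]
    have : a * (b + 1) = a * b + a := by ring
    omega

lemma crs_rho {n K i : ℕ} (h1 : 1 ≤ K) (h2 : K + i + 1 ≤ n) : crs (rho n K i) = i * K := by
  have hs : n - K - i - 1 + K = n - i - 1 := by omega
  -- fiberwise count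
  have key : ∀ a : Fin n,
      (Finset.univ.filter (fun b : Fin n => isCrossing (rho n K i) a b)).card =
      (if a.val < n - K - i - 1 then 0 else if a.val < n - i - 1
        then min (n - i - 1 - 1 - a.val) i else min (n - 1 - a.val) K) := by
    intro a
    have ha := a.isLt
    have hfe : Finset.univ.filter (fun b : Fin n => isCrossing (rho n K i) a b) =
        Finset.univ.filter (fun b : Fin n =>
          (a.val < b.val ∧ b.val < rf n K i a.val ∧ rf n K i a.val < rf n K i b.val) ∨
          (rf n K i a.val < rf n K i b.val ∧ rf n K i b.val ≤ a.val ∧ a.val < b.val)) := by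
      apply Finset.filter_congr
      intro b _
      unfold isCrossing
      simp only [Fin.lt_def, Fin.le_def, rho_val h1 h2]
    have hcf : (Finset.univ.filter (fun b : Fin n =>
          (a.val < b.val ∧ b.val < rf n K i a.val ∧ rf n K i a.val < rf n K i b.val) ∨
          (rf n K i a.val < rf n K i b.val ∧ rf n K i b.val ≤ a.val ∧ a.val < b.val))).card =
        ((Finset.range n).filter (fun y : ℕ =>
          (a.val < y ∧ y < rf n K i a.val ∧ rf n K i a.val < rf n K i y) ∨
          (rf n K i a.val < rf n K i y ∧ rf n K i y ≤ a.val ∧ a.val < y))).card :=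
      card_filter_fin n (fun y : ℕ =>
          (a.val < y ∧ y < rf n K i a.val ∧ rf n K i a.val < rf n K i y) ∨
          (rf n K i a.val < rf n K i y ∧ rf n K i y ≤ a.val ∧ a.val < y))
    rw [hfe, hcf]
    split_ifs with hc1 hc2
    · rw [Finset.card_eq_zero, Finset.filter_eq_empty_iff]
      intro y hy
      rw [Finset.mem_range] at hy
      unfold rf
      split_ifs <;> omega
    · have : (Finset.range n).filter (fun y =>
          (a.val < y ∧ y < rf n K i a.val ∧ rf n K i a.val < rf n K i y) ∨
          (rf n K i a.val < rf n K i y ∧ rf n K i y ≤ a.val ∧ a.val < y)) =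
          Finset.Ioo a.val (min (a.val + i + 1) (n - i - 1)) := by
        ext y
        rw [Finset.mem_filter, Finset.mem_range, Finset.mem_Ioo]
        unfold rf
        split_ifs <;> omega
      rw [this, Nat.card_Ioo]
      omega
    · have : (Finset.range n).filter (fun y =>
          (a.val < y ∧ y < rf n K i a.val ∧ rf n K i a.val < rf n K i y) ∨
          (rf n K i a.val < rf n K i y ∧ rf n K i y ≤ a.val ∧ a.val < y)) =
          Finset.Ioo a.val (min (a.val + K + 1) n) := by
        ext y
        rw [Finset.mem_filter, Finset.mem_range, Finset.mem_Ioo]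
        unfold rf
        split_ifs <;> omega
      rw [this, Nat.card_Ioo]
      omega
  -- sum up
  rw [crs, Finset.card_filter, Fintype.sum_prod_type]
  have : ∀ a : Fin n, ∑ b : Fin n, (if isCrossing (rho n K i) a b then 1 else 0) =
      (if a.val < n - K - i - 1 then 0 else if a.val < n - i - 1
        then min (n - i - 1 - 1 - a.val) i else min (n - 1 - a.val) K) := by
    intro a
    rw [← Finset.card_filter]
    exact key a
  rw [Finset.sum_congr rfl (fun a _ => this a)]
  rw [Fin.sum_univ_eq_sum_range (fun x => if x < n - K - i - 1 then 0 else
    if x < n - i - 1 then min (n - i - 1 - 1 - x) i else min (n - 1 - x) K) n]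
  rw [Finset.range_eq_Ico,
    ← Finset.sum_Ico_consecutive _ (Nat.zero_le (n - K - i - 1)) (by omega : n - K - i - 1 ≤ n),
    ← Finset.sum_Ico_consecutive _ (by omega : n - K - i - 1 ≤ n - i - 1) (by omega : n - i - 1 ≤ n)]
  have e1 : ∑ x ∈ Finset.Ico 0 (n - K - i - 1), (if x < n - K - i - 1 then 0 else
      if x < n - i - 1 then min (n - i - 1 - 1 - x) i else min (n - 1 - x) K) = 0 := by
    apply Finset.sum_eq_zero
    intro x hx
    rw [Finset.mem_Ico] at hx
    rw [if_pos hx.2]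
  have e2 : ∑ x ∈ Finset.Ico (n - K - i - 1) (n - i - 1), (if x < n - K - i - 1 then 0 else
      if x < n - i - 1 then min (n - i - 1 - 1 - x) i else min (n - 1 - x) K) =
      ∑ j ∈ Finset.range K, min j i := by
    have step1 : ∀ x ∈ Finset.Ico (n - K - i - 1) (n - i - 1), (if x < n - K - i - 1 then 0 else
        if x < n - i - 1 then min (n - i - 1 - 1 - x) i else min (n - 1 - x) K) =
        min (n - i - 1 - 1 - x) i := by
      intro x hx
      rw [Finset.mem_Ico] at hx
      rw [if_neg (by omega), if_pos hx.2]
    rw [Finset.sum_congr rfl step1, Finset.sum_Ico_eq_sum_range]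
    have hKr : n - i - 1 - (n - K - i - 1) = K := by omega
    rw [hKr]
    have step2 : ∀ x ∈ Finset.range K, min (n - i - 1 - 1 - (n - K - i - 1 + x)) i =
        min (K - 1 - x) i := by
      intro x hx
      rw [Finset.mem_range] at hx
      congr 1
      omega
    rw [Finset.sum_congr rfl step2]
    exact Finset.sum_range_reflect (fun j => min j i) K
  have e3 : ∑ x ∈ Finset.Ico (n - i - 1) n, (if x < n - K - i - 1 then 0 else
      if x < n - i - 1 then min (n - i - 1 - 1 - x) i else min (n - 1 - x) K) =
      ∑ j ∈ Finset.range (i+1), min j K := by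
    have step1 : ∀ x ∈ Finset.Ico (n - i - 1) n, (if x < n - K - i - 1 then 0 else
        if x < n - i - 1 then min (n - i - 1 - 1 - x) i else min (n - 1 - x) K) =
        min (n - 1 - x) K := by
      intro x hx
      rw [Finset.mem_Ico] at hx
      rw [if_neg (by omega), if_neg (by omega)]
    rw [Finset.sum_congr rfl step1, Finset.sum_Ico_eq_sum_range]
    have hir : n - (n - i - 1) = i + 1 := by omega
    rw [hir]
    have step2 : ∀ x ∈ Finset.range (i+1), min (n - 1 - (n - i - 1 + x)) K =
        min (i + 1 - 1 - x) K := by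
      intro x hx
      rw [Finset.mem_range] at hx
      congr 1
      omega
    rw [Finset.sum_congr rfl step2]
    exact Finset.sum_range_reflect (fun j => min j K) (i+1)
  rw [e1, e2, e3, zero_add]
  rw [minsum K i]
  ring

lemma rho_ne_one {n K i : ℕ} (hn : 1 ≤ n) (h1 : 1 ≤ K) (h2 : K + i + 1 ≤ n) :
    rho n K i ≠ 1 := by
  intro h
  have := rho_val h1 h2 ⟨n - 1, by omega⟩
  rw [h] at this
  simp only [Equiv.Perm.one_apply] at this
  unfold rf at this
  split_ifs at this <;> omega

lemma rho_inj {n : ℕ} (hn : 1 ≤ n) {K i K' i' : ℕ} (h1 : 1 ≤ K) (h2 : K + i + 1 ≤ n)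
    (h1' : 1 ≤ K') (h2' : K' + i' + 1 ≤ n) (h : rho n K i = rho n K' i') :
    K = K' ∧ i = i' := by
  have e1 : rf n K i (n - 1) = rf n K' i' (n - 1) := by
    have := congrArg (fun σ : Equiv.Perm (Fin n) => (σ ⟨n - 1, by omega⟩).val) h
    simpa only [rho_val h1 h2, rho_val h1' h2', Fin.val_mk] using this
  have hKK : K = K' := by
    unfold rf at e1
    split_ifs at e1 <;> omega
  subst hKK
  have e2 : rf n K i (n - K - i - 1) = rf n K i' (n - K - i - 1) := by
    have := congrArg (fun σ : Equiv.Perm (Fin n) => (σ ⟨n - K - i - 1, by omega⟩).val) h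
    simpa only [rho_val h1 h2, rho_val h1' h2', Fin.val_mk] using this
  refine ⟨rfl, ?_⟩
  unfold rf at e2
  split_ifs at e2 <;> omega


theorem sum_321_213 (n : ℕ) (hn : 1 ≤ n) :
    ∑ σ ∈ Finset.univ.filter (fun σ : Equiv.Perm (Fin n) => avoids321 σ ∧ avoids213 σ),
        (Polynomial.X : Polynomial ℤ) ^ crs σ =
      1 + ∑ k ∈ Finset.Icc 1 (n - 1), ∑ i ∈ Finset.range (n - k),
        (Polynomial.X : Polynomial ℤ) ^ (i * k) := by
  have hmem_bound : ∀ p : (_ : ℕ) × ℕ, p ∈ (Finset.Icc 1 (n-1)).sigma (fun k => Finset.range (n - k)) →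
      1 ≤ p.1 ∧ p.1 + p.2 + 1 ≤ n := by
    rintro ⟨K, i⟩ hp
    rw [Finset.mem_sigma, Finset.mem_Icc, Finset.mem_range] at hp
    omega
  have hset : Finset.univ.filter (fun σ : Equiv.Perm (Fin n) => avoids321 σ ∧ avoids213 σ) =
      insert 1 (((Finset.Icc 1 (n-1)).sigma (fun k => Finset.range (n - k))).image
        (fun p : (_ : ℕ) × ℕ => rho n p.1 p.2)) := by
    ext σ
    rw [Finset.mem_filter, Finset.mem_insert, Finset.mem_image]
    constructor
    · rintro ⟨-, hA, hB⟩
      by_cases hσ : σ = 1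
      · exact Or.inl hσ
      · obtain ⟨K, i, h1, h2, heq⟩ := classify σ hA hB hσ
        exact Or.inr ⟨⟨K, i⟩, by
          simp only [Finset.mem_sigma, Finset.mem_Icc, Finset.mem_range]
          omega, heq.symm⟩
    · rintro (h | ⟨⟨K, i⟩, hp, heq⟩)
      · rw [h]; exact ⟨Finset.mem_univ _, one_avoids n⟩
      · obtain ⟨h1, h2⟩ := hmem_bound _ hp
        rw [← heq]
        exact ⟨Finset.mem_univ _, rho_avoids h1 h2⟩
  rw [hset]
  rw [Finset.sum_insert (by
    rw [Finset.mem_image]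
    rintro ⟨⟨K, i⟩, hp, heq⟩
    obtain ⟨h1, h2⟩ := hmem_bound _ hp
    exact rho_ne_one hn h1 h2 heq)]
  rw [Finset.sum_image (by
    rintro ⟨K, i⟩ hp ⟨K', i'⟩ hp' heq
    obtain ⟨h1, h2⟩ := hmem_bound _ hp
    obtain ⟨h1', h2'⟩ := hmem_bound _ hp'
    obtain ⟨hK, hi⟩ := rho_inj hn h1 h2 h1' h2' heq
    subst hK; subst hi; rfl)]
  rw [crs_one, pow_zero]
  congr 1
  rw [Finset.sum_sigma']
  apply Finset.sum_congr rfl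
  rintro ⟨K, i⟩ hp
  obtain ⟨h1, h2⟩ := hmem_bound _ hp
  rw [crs_rho h1 h2]
end

section
/- For 1 ≤ j ≤ n, let α_j be the permutation of [n] given in one-line notation by (n−j+2)(n−j+3)…n 1 2 … (n+1−j), i.e., α_j(i) = n−j+1+i for i ≤ j−1 and α_j(i) = i−j+1 for i ≥ j. Then crs(α_j) = (j−1)(n−j). -/
open Finset Polynomial Equiv

attribute [local instance] Classical.propDecidable

theorem crs_alpha (n j : ℕ) (hj1 : 1 ≤ j) (hj2 : j ≤ n) (σ : Equiv.Perm (Fin n))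
    (hσ : ∀ i : Fin n,
      (σ i).val = if i.val < j - 1 then n - j + 1 + i.val else i.val - (j - 1)) :
    crs σ = (j - 1) * (n - j) := by
  have key : ∀ p : Fin n × Fin n, isCrossing σ p.1 p.2 ↔
      ((p.1.val < p.2.val ∧ p.2.val < j - 1 ∧ p.2.val - p.1.val ≤ n - j) ∨
       (j - 1 ≤ p.1.val ∧ p.1.val < p.2.val ∧ p.2.val - p.1.val ≤ j - 1)) := by
    rintro ⟨i, j'⟩
    have hi := hσ i
    have hj' := hσ j'
    have h1 := i.isLt
    have h2 := j'.isLt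
    simp only [isCrossing, Fin.lt_def, Fin.le_def]
    split_ifs at hi hj' <;> omega
  have hcard : crs σ = ((Finset.range (j-1)) ×ˢ (Finset.range (n-j))).card := by
    unfold crs
    apply Finset.card_bij (fun p _ =>
      if p.1.val < j - 1 then (j - 1 - 1 - p.1.val, (n - j) - (p.2.val - p.1.val))
      else (p.2.val - p.1.val - 1, p.1.val - (j - 1)))
    · intro p hp
      rw [Finset.mem_filter] at hp
      have hc := (key p).mp hp.2
      have h1 := p.1.isLt
      have h2 := p.2.isLt
      split_ifs <;> simp only [Finset.mem_product, Finset.mem_range] <;> omega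
    · intro p1 h1 p2 h2 heq
      rw [Finset.mem_filter] at h1 h2
      have k1 := (key p1).mp h1.2
      have k2 := (key p2).mp h2.2
      have b1 := p1.1.isLt
      have b2 := p1.2.isLt
      have b3 := p2.1.isLt
      have b4 := p2.2.isLt
      have e1 : p1.1.val = p2.1.val ∧ p1.2.val = p2.2.val := by
        split_ifs at heq <;> (rw [Prod.mk.injEq] at heq; omega)
      exact Prod.ext (Fin.ext e1.1) (Fin.ext e1.2)
    · intro q hq
      simp only [Finset.mem_product, Finset.mem_range] at hq
      by_cases hab : n - j ≤ q.1 + q.2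
      · refine ⟨(⟨j - 1 - 1 - q.1, by omega⟩, ⟨j - 1 - 1 - q.1 + (n - j) - q.2, by omega⟩),
          ?_, ?_⟩
        · rw [Finset.mem_filter]
          refine ⟨Finset.mem_univ _, (key _).mpr ?_⟩
          left
          simp only
          omega
        · simp only
          rw [if_pos (by omega)]
          rw [Prod.mk.injEq]
          omega
      · refine ⟨(⟨j - 1 + q.2, by omega⟩, ⟨j - 1 + q.2 + q.1 + 1, by omega⟩), ?_, ?_⟩
        · rw [Finset.mem_filter]
          refine ⟨Finset.mem_univ _, (key _).mpr ?_⟩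
          right
          simp only
          omega
        · simp only
          rw [if_neg (by omega)]
          rw [Prod.mk.injEq]
          omega
  rw [hcard, Finset.card_product, Finset.card_range, Finset.card_range]
end

section
/- For every permutation σ of [n], inv(σ) = 2·nes(σ) + crs(σ) + exc(σ), where inv is the number of inversions, exc the number of excedances, crs the number of crossings, and nes the number of nestings. -/
open Finset Polynomial Equiv

attribute [local instance] Classical.propDecidable

noncomputable def inv' {n : ℕ} (σ : Equiv.Perm (Fin n)) : ℕ :=
  (Finset.univ.filter (fun p : Fin n × Fin n => p.1 < p.2 ∧ σ p.2 < σ p.1)).card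

noncomputable def exc {n : ℕ} (σ : Equiv.Perm (Fin n)) : ℕ :=
  (Finset.univ.filter (fun i : Fin n => i < σ i)).card

def isNesting {n : ℕ} (σ : Equiv.Perm (Fin n)) (i j : Fin n) : Prop :=
  (i < j ∧ j < σ j ∧ σ j < σ i) ∨ (σ j < σ i ∧ σ i ≤ i ∧ i < j)

noncomputable def nes {n : ℕ} (σ : Equiv.Perm (Fin n)) : ℕ :=
  (Finset.univ.filter (fun p : Fin n × Fin n => isNesting σ p.1 p.2)).card

/-!
Split the inversions `(i, j)` according to whether `i` is an excedance. If it is not, `(i, j)`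
is a lower nesting. If it is, counting values below `σ i` and positions before `i` gives
`#{j > i | σ j < σ i} = 1 + (σ i - i - 1) + #{j < i | σ j > σ i}`, and the last term counts
the upper nestings with inner arc at `i`. A point `k` strictly under the upper arc `i ↦ σ i`
either is an excedance, making `(i, k)` an upper crossing or nesting, or is not; in that case,
since as many arcs jump rightwards over the cut `k | k + 1` as leftwards, the upper arcs over `k`
are equinumerous with the lower arcs over it, i.e. with the lower crossings and nestings `(k, j)`.
-/

section Counting

variable {α β : Type*} [Fintype α] [Fintype β]

theorem Finset.card_filter_eq_add_of_iff {p q r : α → Prop} [DecidablePred p] [DecidablePred q]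
    [DecidablePred r] (h : ∀ a, p a ↔ q a ∨ r a) (hqr : ∀ a, q a → ¬ r a) :
    #{a | p a} = #{a | q a} + #{a | r a} := by
  rw [← card_union_of_disjoint (disjoint_filter.2 fun a _ => hqr a), ← filter_or]
  exact congrArg card (filter_congr fun a _ => h a)

theorem Finset.card_filter_prod_eq_sum_fst (q : α → Prop) (P : α → β → Prop) [DecidablePred q]
    [∀ a, DecidablePred (P a)] [DecidablePred fun x : α × β => q x.1 ∧ P x.1 x.2] :
    #{x : α × β | q x.1 ∧ P x.1 x.2} = ∑ a with q a, #{b | P a b} := by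
  simp only [card_filter, Fintype.sum_prod_type, sum_filter]
  refine sum_congr rfl fun a _ => ?_
  split_ifs with h <;> simp [h]

theorem Finset.card_filter_prod_eq_sum_snd (q : β → Prop) (P : α → β → Prop) [DecidablePred q]
    [∀ b, DecidablePred (P · b)] [DecidablePred fun x : α × β => q x.2 ∧ P x.1 x.2] :
    #{x : α × β | q x.2 ∧ P x.1 x.2} = ∑ b with q b, #{a | P a b} := by
  simp only [card_filter, Fintype.sum_prod_type, sum_filter]
  rw [sum_comm]
  refine sum_congr rfl fun b _ => ?_
  split_ifs with h <;> simp [h]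

theorem Equiv.Perm.card_filter_apply (σ : Perm α) (p : α → Prop) [DecidablePred p] :
    #{a | p (σ a)} = #{a | p a} := by
  simp only [card_filter]
  exact Equiv.sum_comp σ fun a => if p a then 1 else 0

theorem Equiv.Perm.card_filter_and_not_apply (σ : Perm α) (p : α → Prop) [DecidablePred p] :
    #{a | p a ∧ ¬ p (σ a)} = #{a | ¬ p a ∧ p (σ a)} := by
  have hp : #{a | p a} = #{a | p a ∧ p (σ a)} + #{a | p a ∧ ¬ p (σ a)} :=
    card_filter_eq_add_of_iff (fun a => by tauto) (fun a => by tauto)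
  have hσp : #{a | p (σ a)} = #{a | p a ∧ p (σ a)} + #{a | ¬ p a ∧ p (σ a)} :=
    card_filter_eq_add_of_iff (fun a => by tauto) (fun a => by tauto)
  have := σ.card_filter_apply p
  omega

end Counting

section Fin

variable {n : ℕ} (σ : Perm (Fin n))

theorem card_lt_apply_lt_add (i : Fin n) :
    #{j | i < j ∧ σ j < σ i} + i = σ i + #{j | j < i ∧ σ i < σ j} := by
  have hσi : #{j | σ j < σ i} = σ i := by
    rw [σ.card_filter_apply (· < σ i), filter_gt_eq_Iio, Fin.card_Iio]
  have hi : #{j | j < i} = i := by rw [filter_gt_eq_Iio, Fin.card_Iio]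
  have hσi_split : #{j | σ j < σ i} = #{j | j < i ∧ σ j < σ i} + #{j | i < j ∧ σ j < σ i} :=
    card_filter_eq_add_of_iff (fun j => by grind) (fun j => by grind)
  have hi_split : #{j | j < i} = #{j | j < i ∧ σ j < σ i} + #{j | j < i ∧ σ i < σ j} :=
    card_filter_eq_add_of_iff (fun j => by grind [Equiv.apply_eq_iff_eq]) (fun j => by grind)
  omega

theorem card_lt_apply_lt_of_lt_apply {i : Fin n} (hi : i < σ i) :
    #{j | i < j ∧ σ j < σ i} = 1 + #{k | i < k ∧ k < σ i} + #{j | j < i ∧ σ i < σ j} := by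
  have h := card_lt_apply_lt_add σ i
  rw [filter_lt_lt_eq_Ioo, Fin.card_Ioo]
  rw [Fin.lt_def] at hi
  omega

theorem card_lt_lt_apply_eq_card_lt_apply_le {k : Fin n} (hk : σ k ≤ k) :
    #{i | i < k ∧ k < σ i} = #{j | k < j ∧ σ j ≤ k} := by
  have h := σ.card_filter_and_not_apply (· ≤ k)
  simp only [not_le] at h
  convert h using 2
  exact filter_congr fun i _ => by grind

noncomputable def upperNes : ℕ :=
  #{p : Fin n × Fin n | p.1 < p.2 ∧ p.2 < σ p.2 ∧ σ p.2 < σ p.1}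

noncomputable def lowerNes : ℕ :=
  #{p : Fin n × Fin n | σ p.2 < σ p.1 ∧ σ p.1 ≤ p.1 ∧ p.1 < p.2}

noncomputable def upperCrs : ℕ :=
  #{p : Fin n × Fin n | p.1 < p.2 ∧ p.2 < σ p.1 ∧ σ p.1 < σ p.2}

noncomputable def lowerCrs : ℕ :=
  #{p : Fin n × Fin n | σ p.1 < σ p.2 ∧ σ p.2 ≤ p.1 ∧ p.1 < p.2}

theorem nes_eq_upperNes_add_lowerNes : nes σ = upperNes σ + lowerNes σ :=
  card_filter_eq_add_of_iff (fun _ => Iff.rfl) (fun _ => by grind)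

theorem crs_eq_upperCrs_add_lowerCrs : crs σ = upperCrs σ + lowerCrs σ :=
  card_filter_eq_add_of_iff (fun _ => Iff.rfl) (fun _ => by grind)

theorem inv'_eq_card_add_lowerNes :
    inv' σ = #{p : Fin n × Fin n | p.1 < σ p.1 ∧ p.1 < p.2 ∧ σ p.2 < σ p.1} + lowerNes σ := by
  rw [add_comm]
  exact card_filter_eq_add_of_iff (fun _ => by grind) (fun _ => by grind)

theorem card_upper_inversions :
    #{p : Fin n × Fin n | p.1 < σ p.1 ∧ p.1 < p.2 ∧ σ p.2 < σ p.1}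
      = exc σ + #{p : Fin n × Fin n | p.1 < σ p.1 ∧ p.1 < p.2 ∧ p.2 < σ p.1} + upperNes σ := by
  have hnes : upperNes σ = #{p : Fin n × Fin n | p.2 < σ p.2 ∧ p.1 < p.2 ∧ σ p.2 < σ p.1} :=
    congrArg card (filter_congr fun _ _ => by grind)
  rw [hnes, card_filter_prod_eq_sum_fst (fun i => i < σ i) (fun i j => i < j ∧ σ j < σ i),
    card_filter_prod_eq_sum_fst (fun i => i < σ i) (fun i k => i < k ∧ k < σ i),
    card_filter_prod_eq_sum_snd (fun i => i < σ i) (fun k i => k < i ∧ σ i < σ k), exc,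
    card_eq_sum_ones, ← sum_add_distrib, ← sum_add_distrib]
  exact sum_congr rfl fun i hi => by
    rw [card_lt_apply_lt_of_lt_apply σ (mem_filter.1 hi).2]

theorem card_under_upper_arc :
    #{p : Fin n × Fin n | p.1 < σ p.1 ∧ p.1 < p.2 ∧ p.2 < σ p.1}
      = upperCrs σ + upperNes σ
        + #{p : Fin n × Fin n | σ p.2 ≤ p.2 ∧ p.1 < p.2 ∧ p.2 < σ p.1} := by
  rw [upperCrs, upperNes, ← card_filter_eq_add_of_iff (fun _ => Iff.rfl) (fun _ => by grind)]
  exact card_filter_eq_add_of_iff (fun _ => by grind [Equiv.apply_eq_iff_eq]) (fun _ => by grind)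

theorem card_lower_under_upper_arc :
    #{p : Fin n × Fin n | σ p.2 ≤ p.2 ∧ p.1 < p.2 ∧ p.2 < σ p.1} = lowerCrs σ + lowerNes σ := by
  rw [card_filter_prod_eq_sum_snd (fun k => σ k ≤ k) (fun i k => i < k ∧ k < σ i),
    sum_congr rfl fun k hk => card_lt_lt_apply_eq_card_lt_apply_le σ (mem_filter.1 hk).2,
    ← card_filter_prod_eq_sum_fst (fun k => σ k ≤ k) (fun k j => k < j ∧ σ j ≤ k)]
  exact card_filter_eq_add_of_iff (fun _ => by grind [Equiv.apply_eq_iff_eq]) (fun _ => by grind)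

end Fin

theorem inv_decomposition (n : ℕ) (σ : Equiv.Perm (Fin n)) :
    inv' σ = 2 * nes σ + crs σ + exc σ := by
  rw [inv'_eq_card_add_lowerNes, card_upper_inversions, card_under_upper_arc,
    card_lower_under_upper_arc, nes_eq_upperNes_add_lowerNes, crs_eq_upperCrs_add_lowerCrs]
  ring
end
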